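/- arXiv:1804.01293 — 2 statements merged into one kernel-verified Lean document; each statement's English description precedes it below -/
import Mathlib

section
/- The generating function C(x) of Łukasiewicz paths with no flat step at positive height, in which every up step is immediately followed by a down step, satisfies C(x) = 1 + xC(x) + x²C(x)/(1 − x·C̄(x)), where C̄(x) = 1 + x Σ_{k ≥ 1} x^k C̄(x)^k counts such paths without any flat steps; explicitly C(x) = (1 − x + x² + √(1 − 2x − x² − 2x³ + x⁴)) / (1 − 2x − x³ + (1 − x)√(1 − 2x − x² − 2x³ + x⁴)). -/
open PowerSeries

/-- A Łukasiewicz path: vertical step components, each `≥ -1`, all partial sums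
nonnegative, total sum `0`. -/
def IsLukas (w : List ℤ) : Prop :=
  (∀ s ∈ w, -1 ≤ s) ∧ (∀ k, 0 ≤ (w.take k).sum) ∧ w.sum = 0

/-- No flat step at positive height: every flat step starts at ordinate `0`. -/
def NoFlatAtPosHeight (w : List ℤ) : Prop :=
  ∀ j : ℕ, w[j]? = some 0 → (w.take j).sum = 0

/-- Every up step is immediately followed by a down step. -/
def UpThenDown (w : List ℤ) : Prop :=
  ∀ j : ℕ, ∀ s : ℤ, w[j]? = some s → 1 ≤ s → w[j + 1]? = some (-1)

namespace LukasAux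

/-- class of `C`-paths -/
def CP (w : List ℤ) : Prop := IsLukas w ∧ NoFlatAtPosHeight w ∧ UpThenDown w

/-- class of `C̄`-paths -/
def CbP (w : List ℤ) : Prop := CP w ∧ (0:ℤ) ∉ w

/-- class of "descending sequences of first-passage pieces" -/
def SP (v : List ℤ) : Prop :=
  (∀ x ∈ v, -1 ≤ x) ∧ (0:ℤ) ∉ v ∧ UpThenDown v ∧
    ∀ k < v.length, v.sum < (v.take k).sum

lemma sum_ge_neg_length (w : List ℤ) (h : ∀ x ∈ w, -1 ≤ x) :
    -(w.length : ℤ) ≤ w.sum := by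
  induction w with
  | nil => simp
  | cons a t ih =>
    have ha := h a (by simp)
    have := ih (fun x hx => h x (by simp [hx]))
    simp only [List.sum_cons, List.length_cons]
    push_cast
    linarith

lemma SP_sum_nonpos {v : List ℤ} (h : SP v) : v.sum ≤ 0 := by
  rcases v with _ | ⟨a, t⟩
  · simp
  · have := h.2.2.2 0 (by simp)
    simpa using this.le

/-- lists of a given length with entries in a finset form a finite set -/
lemma finite_len (S : Finset ℤ) : ∀ n : ℕ,
    {w : List ℤ | w.length = n ∧ ∀ x ∈ w, x ∈ S}.Finite := by
  intro n
  induction n with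
  | zero =>
    apply Set.Finite.subset (Set.finite_singleton ([] : List ℤ))
    rintro w ⟨h, -⟩
    simp [List.length_eq_zero_iff.mp h]
  | succ n ih =>
    have hsub : {w : List ℤ | w.length = n+1 ∧ ∀ x ∈ w, x ∈ S} ⊆
        ⋃ x ∈ (S : Set ℤ), (fun t => x :: t) '' {w | w.length = n ∧ ∀ x ∈ w, x ∈ S} := by
      rintro w ⟨hl, hm⟩
      rcases w with _ | ⟨a, t⟩
      · simp at hl
      · refine Set.mem_biUnion (hm a (by simp)) ⟨t, ⟨by simpa using hl,
          fun x hx => hm x (by simp [hx])⟩, rfl⟩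
    exact Set.Finite.subset (Set.Finite.biUnion S.finite_toSet (fun x _ => ih.image _)) hsub

lemma finC (n : ℕ) : {w : List ℤ | CP w ∧ w.length = n}.Finite := by
  apply Set.Finite.subset (finite_len (Finset.Icc (-1 : ℤ) n) n)
  rintro w ⟨⟨⟨hstep, hpre, hsum⟩, -, -⟩, hlen⟩
  refine ⟨hlen, fun x hx => ?_⟩
  obtain ⟨l₁, l₂, rfl⟩ := List.append_of_mem hx
  have h1 : (0:ℤ) ≤ l₁.sum := by
    have := hpre l₁.length
    simpa [List.take_append] using this
  have h2 : -(l₂.length : ℤ) ≤ l₂.sum :=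
    sum_ge_neg_length _ (fun y hy => hstep y (by simp [hy]))
  have h3 : l₁.sum + (x + l₂.sum) = 0 := by simpa using hsum
  have h4 : (l₂.length : ℤ) ≤ (l₁ ++ x :: l₂).length := by
    simp; push_cast; linarith
  simp only [Finset.mem_Icc]
  rw [hlen] at h4
  constructor
  · exact hstep x (by simp)
  · linarith

lemma finCb (n : ℕ) : {w : List ℤ | CbP w ∧ w.length = n}.Finite :=
  Set.Finite.subset (finC n) (fun w ⟨⟨h1, _⟩, h2⟩ => ⟨h1, h2⟩)

lemma finS (n : ℕ) : {w : List ℤ | SP w ∧ w.length = n}.Finite := by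
  apply Set.Finite.subset (finite_len (Finset.Icc (-1 : ℤ) n) n)
  rintro w ⟨⟨hstep, hz, hutd, hkey⟩, hlen⟩
  refine ⟨hlen, fun x hx => ?_⟩
  obtain ⟨l₁, l₂, rfl⟩ := List.append_of_mem hx
  have hsum0 : (l₁ ++ x :: l₂).sum ≤ 0 := SP_sum_nonpos ⟨hstep, hz, hutd, hkey⟩
  have h1 : (l₁ ++ x :: l₂).sum ≤ l₁.sum := by
    by_cases hc : l₁.length < (l₁ ++ x :: l₂).length
    · have := hkey l₁.length hc
      simp only [List.take_append, List.take_length, Nat.sub_self,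
        List.take_zero, List.append_nil] at this
      simpa using this.le
    · exfalso; simp at hc
  have h2 : -(l₂.length : ℤ) ≤ l₂.sum :=
    sum_ge_neg_length _ (fun y hy => hstep y (by simp [hy]))
  have h3 : (l₁ ++ x :: l₂).sum = l₁.sum + (x + l₂.sum) := by simp
  have h4 : (l₂.length : ℤ) ≤ (l₁ ++ x :: l₂).length := by
    simp; push_cast; linarith
  rw [hlen] at h4
  simp only [Finset.mem_Icc]
  exact ⟨hstep x (by simp), by linarith⟩

noncomputable def CF (n : ℕ) : Finset (List ℤ) := (finC n).toFinset
noncomputable def CbF (n : ℕ) : Finset (List ℤ) := (finCb n).toFinset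
noncomputable def SF (n : ℕ) : Finset (List ℤ) := (finS n).toFinset

lemma mem_CF {w : List ℤ} {n : ℕ} : w ∈ CF n ↔ CP w ∧ w.length = n := by
  simp [CF, Set.Finite.mem_toFinset]
lemma mem_CbF {w : List ℤ} {n : ℕ} : w ∈ CbF n ↔ CbP w ∧ w.length = n := by
  simp [CbF, Set.Finite.mem_toFinset]
lemma mem_SF {w : List ℤ} {n : ℕ} : w ∈ SF n ↔ SP w ∧ w.length = n := by
  simp [SF, Set.Finite.mem_toFinset]


lemma noflat_of_not_mem {w : List ℤ} (h : (0:ℤ) ∉ w) : NoFlatAtPosHeight w :=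
  fun _ hj => absurd (List.mem_of_getElem? hj) h

lemma take_drop_sum (w : List ℤ) (m k : ℕ) :
    ((w.drop m).take k).sum = (w.take (m+k)).sum - (w.take m).sum := by
  rw [List.take_add, List.sum_append]; ring

lemma take_append_sum (u v : List ℤ) (k : ℕ) :
    ((u ++ v).take k).sum = (u.take k).sum + (v.take (k - u.length)).sum := by
  rw [List.take_append, List.sum_append]

lemma get?_glue (u v : List ℤ) (x : ℤ) (m : ℕ) :
    (u ++ x :: v)[u.length + 1 + m]? = v[m]? := by
  rw [List.getElem?_append_right (by omega)]
  have : u.length + 1 + m - u.length = m + 1 := by omega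
  rw [this, List.getElem?_cons_succ]

lemma exists_hit (w : List ℤ) (hstep : ∀ x ∈ w, -1 ≤ x) (t : ℤ)
    (hle : w.sum ≤ t) (ht : t ≤ 0) : ∃ j ≤ w.length, (w.take j).sum = t := by
  induction w generalizing t with
  | nil =>
    refine ⟨0, by simp, ?_⟩
    simp only [List.sum_nil] at hle
    simp; omega
  | cons a u ih =>
    by_cases h0 : t = 0
    · exact ⟨0, by simp, by simp [h0]⟩
    · have ha : -1 ≤ a := hstep a (by simp)
      obtain ⟨j, hj, hsum⟩ := ih (fun x hx => hstep x (by simp [hx])) (t - a)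
        (by simp at hle; linarith) (by omega)
      exact ⟨j + 1, by simpa using hj, by simpa [List.take_cons] using by linarith [hsum]⟩

lemma first_hit (w : List ℤ) (hstep : ∀ x ∈ w, -1 ≤ x) (t : ℤ)
    (hle : w.sum ≤ t) (ht : t ≤ 0) :
    ∃ j, j ≤ w.length ∧ (w.take j).sum = t ∧ ∀ i < j, t < (w.take i).sum := by
  obtain ⟨j₀, hj₀, hs₀⟩ := exists_hit w hstep t hle ht
  have hP : ∃ j, (w.take j).sum = t := ⟨j₀, hs₀⟩
  classical
  refine ⟨Nat.find hP, le_trans (Nat.find_min' hP hs₀) hj₀, Nat.find_spec hP, ?_⟩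
  intro i hi
  have hne : (w.take i).sum ≠ t := fun h => Nat.find_min hP hi h
  rcases lt_or_gt_of_ne hne with hlt | hgt
  · exfalso
    obtain ⟨j', hj', hs'⟩ := exists_hit (w.take i) (fun x hx => hstep x (List.take_subset _ _ hx))
      t hlt.le ht
    rw [List.take_take] at hs'
    have hj'i : j' ≤ i := le_trans hj' (by simp [List.length_take])
    rw [min_eq_left hj'i] at hs'
    exact Nat.find_min hP (lt_of_le_of_lt hj'i hi) hs'
  · exact hgt

lemma utd_drop {w : List ℤ} (m : ℕ) (h : UpThenDown w) : UpThenDown (w.drop m) := by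
  intro i s hi hs
  rw [List.getElem?_drop] at hi ⊢
  have := h (m+i) s hi hs
  rwa [Nat.add_assoc] at this

lemma utd_take {w : List ℤ} (j : ℕ) (h : UpThenDown w)
    (hlast : ∀ s : ℤ, j ≠ 0 → w[j-1]? = some s → s ≤ 0) :
    UpThenDown (w.take j) := by
  intro i s hi hs
  have hij : i < j := by
    have hlen : i < (w.take j).length := by
      by_contra hc
      rw [List.getElem?_eq_none_iff.mpr (by omega)] at hi
      cases hi
    simp [List.length_take] at hlen; omega
  have hwi : w[i]? = some s := by rwa [List.getElem?_take_of_lt hij] at hi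
  have hi1 : i + 1 < j := by
    rcases Nat.lt_or_ge (i+1) j with h' | h'
    · exact h'
    · exfalso
      have hij1 : i = j - 1 := by omega
      have := hlast s (by omega) (by rw [← hij1]; exact hwi)
      linarith
  rw [List.getElem?_take_of_lt hi1]
  exact h i s hwi hs

lemma CP_nil : CP [] :=
  ⟨⟨by simp, by simp, rfl⟩, fun j h => by simp at h, fun j s h => by simp at h⟩

lemma SP_nil : SP [] :=
  ⟨by simp, by simp, fun j s h => by simp at h, by simp⟩

-- last element of a Lukas path is not an up-step (sum argument)
lemma lukas_no_up_last {w : List ℤ} (hpre : ∀ k, 0 ≤ (w.take k).sum) (hsum : w.sum = 0)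
    {s : ℤ} (h : w[w.length - 1]? = some s) (hne : w ≠ []) : s ≤ 0 := by
  have hlen : 0 < w.length := List.length_pos_iff.mpr hne
  have hget : w.get ⟨w.length - 1, by omega⟩ = s := by
    rw [List.getElem?_eq_getElem (by omega)] at h
    exact Option.some_injective _ h
  have := List.sum_take_succ w (w.length - 1) (by omega)
  rw [List.get_eq_getElem] at hget
  rw [hget] at this
  have h2 : w.take (w.length - 1 + 1) = w := List.take_of_length_le (by omega)
  rw [h2, hsum] at this
  have := hpre (w.length - 1)
  linarith

-- chunk 3
lemma SP_glue' {u v : List ℤ} (hu : CbP u) (hv : SP v) : SP (u ++ (-1:ℤ) :: v) := by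
  obtain ⟨⟨⟨hstep, hpre, hsum⟩, hnf, hutd⟩, hz⟩ := hu
  obtain ⟨vstep, vz, vutd, vkey⟩ := hv
  set a := u.length with ha
  refine ⟨?_, ?_, ?_, ?_⟩
  · intro x hx
    rcases List.mem_append.mp hx with h | h
    · exact hstep x h
    · rcases List.mem_cons.mp h with rfl | h
      · exact le_refl _
      · exact vstep x h
  · intro hmem
    rcases List.mem_append.mp hmem with h | h
    · exact hz h
    · rcases List.mem_cons.mp h with h | h
      · exact absurd h (by norm_num)
      · exact vz h
  · intro i s hi hs
    rcases Nat.lt_trichotomy i a with hia | hia | hia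
    · rw [List.getElem?_append_left hia] at hi
      have hi1 : i + 1 < a := by
        rcases Nat.lt_or_ge (i+1) a with h' | h'
        · exact h'
        · exfalso
          have hieq : i = a - 1 := by omega
          have hle := lukas_no_up_last hpre hsum (by rw [← ha, ← hieq]; exact hi)
            (by intro hnil; subst hnil; simp [ha] at hia)
          linarith
      rw [List.getElem?_append_left (by omega)]
      exact hutd i s hi hs
    · exfalso
      subst hia
      rw [List.getElem?_append_right (le_refl _), Nat.sub_self] at hi
      simp at hi
      omega
    · obtain ⟨m, rfl⟩ : ∃ m, i = a + 1 + m := ⟨i - a - 1, by omega⟩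
      rw [get?_glue] at hi
      have h2 := vutd m s hi hs
      have hgoal : (u ++ (-1:ℤ) :: v)[a + 1 + (m + 1)]? = some (-1) := by
        rw [get?_glue]; exact h2
      rwa [show a + 1 + m + 1 = a + 1 + (m + 1) by omega]
  · intro k hk
    have hws : (u ++ (-1:ℤ) :: v).sum = v.sum - 1 := by
      rw [List.sum_append, List.sum_cons, hsum]; ring
    rw [hws, take_append_sum]
    rcases le_or_gt k a with hka | hka
    · rw [show k - u.length = 0 by omega]
      simp only [List.take_zero, List.sum_nil, add_zero]
      have := hpre k
      have := SP_sum_nonpos ⟨vstep, vz, vutd, vkey⟩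
      linarith
    · have hklen : k < a + 1 + v.length := by
        have := hk
        simp only [List.length_append, List.length_cons, ← ha] at this
        omega
      obtain ⟨r, hr⟩ : ∃ r, k - u.length = r + 1 := ⟨k - a - 1, by omega⟩
      rw [hr, List.take_of_length_le (by omega), hsum, List.take_cons, List.sum_cons,
        Nat.add_sub_cancel]
      have hrv : r < v.length := by omega
      have := vkey r hrv
      linarith
      omega

lemma glue_len_eq {u u' v v' : List ℤ} (hu : CbP u) (hu' : CbP u')
    (h : u ++ (-1:ℤ) :: v = u' ++ (-1:ℤ) :: v') : u.length = u'.length := by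
  have key : ∀ (p p' q q' : List ℤ), CbP p → CbP p' →
      p ++ (-1:ℤ) :: q = p' ++ (-1:ℤ) :: q' → p.length < p'.length → False := by
    intro p p' q q' hp hp' heq hlt
    have h1 : ((p ++ (-1:ℤ) :: q).take (p.length + 1)).sum = -1 := by
      rw [take_append_sum, List.take_of_length_le (by omega), hp.1.1.2.2,
        show p.length + 1 - p.length = 1 by omega]
      norm_num
    have h2 : ((p' ++ (-1:ℤ) :: q').take (p.length + 1)).sum =
        (p'.take (p.length + 1)).sum := by
      rw [take_append_sum, show p.length + 1 - p'.length = 0 by omega]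
      simp
    have h3 := hp'.1.1.2.1 (p.length + 1)
    rw [heq, h2] at h1
    linarith
  rcases Nat.lt_trichotomy u.length u'.length with h' | h' | h'
  · exact absurd (key u u' v v' hu hu' h h') (by simp)
  · exact h'
  · exact absurd (key u' u v' v hu' hu h.symm h') (by simp)

lemma glue_inj' {u u' v v' : List ℤ} (hu : CbP u) (hu' : CbP u')
    (h : u ++ (-1:ℤ) :: v = u' ++ (-1:ℤ) :: v') : u = u' ∧ v = v' := by
  obtain ⟨h1, h2⟩ := List.append_inj h (glue_len_eq hu hu' h)
  exact ⟨h1, by injection h2⟩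

lemma SP_split' {w : List ℤ} (h : SP w) (hne : w ≠ []) :
    ∃ u v, CbP u ∧ SP v ∧ w = u ++ (-1:ℤ) :: v := by
  obtain ⟨hstep, hz, hutd, hkey⟩ := h
  have hlen : 0 < w.length := List.length_pos_iff.mpr hne
  have hsum : w.sum ≤ -1 := by
    have := hkey 0 hlen
    simp at this
    omega
  obtain ⟨j, hjlen, hjsum, hjmin⟩ := first_hit w hstep (-1) hsum (by norm_num)
  have hj0 : j ≠ 0 := by
    intro h0
    rw [h0] at hjsum
    simp at hjsum
  set a := j - 1 with hadef
  have haj : a + 1 = j := by omega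
  have hsa : (0:ℤ) ≤ (w.take a).sum := by
    have := hjmin a (by omega)
    linarith
  have halen : a < w.length := by omega
  have hstep_a : w.get ⟨a, halen⟩ = -1 ∧ (w.take a).sum = 0 := by
    have hsucc := List.sum_take_succ w a halen
    rw [haj, hjsum] at hsucc
    have hge := hstep _ (List.get_mem w ⟨a, halen⟩)
    simp only [List.get_eq_getElem] at hge ⊢
    constructor <;> linarith
  refine ⟨w.take a, w.drop (a+1), ?_, ?_, ?_⟩
  · refine ⟨⟨⟨fun x hx => hstep x (List.take_subset _ _ hx), ?_, hstep_a.2⟩,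
      noflat_of_not_mem (fun hmem => hz (List.take_subset _ _ hmem)), ?_⟩,
      fun hmem => hz (List.take_subset _ _ hmem)⟩
    · intro k
      rw [List.take_take]
      have hmin : min k a < j := by omega
      have := hjmin (min k a) hmin
      linarith
    · refine utd_take a hutd ?_
      intro s ha0 hgs
      have h1 := hjmin (a-1) (by omega)
      have hsucc := List.sum_take_succ w (a-1) (by omega)
      rw [List.getElem?_eq_getElem (by omega)] at hgs
      have hgs' : w.get ⟨a-1, by omega⟩ = s := Option.some_injective _ hgs
      rw [List.get_eq_getElem] at hgs'
      rw [hgs'] at hsucc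
      rw [show a - 1 + 1 = a by omega] at hsucc
      rw [hstep_a.2] at hsucc
      linarith
  · refine ⟨fun x hx => hstep x (List.drop_subset _ _ hx),
      fun hmem => hz (List.drop_subset _ _ hmem), utd_drop _ hutd, ?_⟩
    intro k hklen
    have hdl : (w.drop (a+1)).length = w.length - (a+1) := List.length_drop
    have hts : ((w.drop (a+1)).take k).sum = (w.take (a+1+k)).sum - (w.take (a+1)).sum :=
      take_drop_sum w (a+1) k
    have hds : (w.drop (a+1)).sum = w.sum - (w.take (a+1)).sum := by
      have := List.sum_take_add_sum_drop w (a+1)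
      linarith
    rw [← haj] at hjsum
    rw [hts, hds, hjsum]
    rw [hdl] at hklen
    have := hkey (a + 1 + k) (by omega)
    linarith
  · conv_lhs => rw [← List.take_append_drop a w]
    rw [List.drop_eq_getElem_cons halen, show w[a] = -1 from hstep_a.1]


-- chunk 4
lemma SP_take_ge {m : List ℤ} (h : SP m) (r : ℕ) : m.sum ≤ (m.take r).sum := by
  rcases lt_or_ge r m.length with hr | hr
  · exact (h.2.2.2 r hr).le
  · rw [List.take_of_length_le hr]

lemma SP_last_not_up {m : List ℤ} (hm : SP m) {r : ℕ} (hr : r + 1 = m.length)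
    {s : ℤ} (hgs : m[r]? = some s) : s ≤ 0 := by
  have hrlen : r < m.length := by omega
  have hsucc := List.sum_take_succ m r hrlen
  rw [List.getElem?_eq_getElem hrlen] at hgs
  have : m.get ⟨r, hrlen⟩ = s := Option.some_injective _ hgs
  rw [List.get_eq_getElem] at this
  rw [this, hr, List.take_of_length_le (le_refl _)] at hsucc
  have := hm.2.2.2 r hrlen
  linarith

lemma up_glue' {m L : List ℤ} (hm : SP m) (hL : CP L) :
    CP ((1 - m.sum) :: (-1:ℤ) :: (m ++ L)) ∧
    ((0:ℤ) ∉ L → (0:ℤ) ∉ ((1 - m.sum) :: (-1:ℤ) :: (m ++ L))) := by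
  obtain ⟨mstep, mz, mutd, mkey⟩ := hm
  obtain ⟨⟨Lstep, Lpre, Lsum⟩, Lnf, Lutd⟩ := hL
  have hms : m.sum ≤ 0 := SP_sum_nonpos ⟨mstep, mz, mutd, mkey⟩
  have hk1 : (1:ℤ) ≤ 1 - m.sum := by linarith
  have hml : ∀ r, m.sum ≤ ((m ++ L).take r).sum := by
    intro r
    rw [take_append_sum]
    have h1 := SP_take_ge ⟨mstep, mz, mutd, mkey⟩ r
    have h2 := Lpre (r - m.length)
    linarith
  refine ⟨⟨⟨?_, ?_, ?_⟩, ?_, ?_⟩, ?_⟩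
  · intro x hx
    rcases List.mem_cons.mp hx with rfl | hx
    · linarith
    rcases List.mem_cons.mp hx with rfl | hx
    · norm_num
    rcases List.mem_append.mp hx with h | h
    · exact mstep x h
    · exact Lstep x h
  · intro i
    match i with
    | 0 => simp
    | 1 => simp; linarith
    | (r+2) =>
      simp only [List.take_succ_cons, List.sum_cons]
      have := hml r
      linarith
  · simp only [List.sum_cons, List.sum_append, Lsum]
    ring
  · intro j hj
    match j with
    | 0 => simp
    | 1 => simp at hj
    | (r+2) =>
      simp only [List.getElem?_cons_succ] at hj
      simp only [List.take_succ_cons, List.sum_cons]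
      rcases lt_or_ge r m.length with hr | hr
      · exfalso
        rw [List.getElem?_append_left hr] at hj
        exact mz (List.mem_of_getElem? hj)
      · rw [List.getElem?_append_right hr] at hj
        have := Lnf _ hj
        rw [take_append_sum, List.take_of_length_le hr, this]
        ring
  · intro i s hi hs
    match i with
    | 0 =>
      simp only [List.getElem?_cons_zero] at hi
      rfl
    | 1 =>
      simp only [List.getElem?_cons_succ, List.getElem?_cons_zero] at hi
      injection hi with hi; omega
    | (r+2) =>
      simp only [List.getElem?_cons_succ] at hi ⊢
      rcases lt_or_ge r m.length with hr | hr
      · rw [List.getElem?_append_left hr] at hi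
        have hr1 : r + 1 < m.length := by
          rcases Nat.lt_or_ge (r+1) m.length with h' | h'
          · exact h'
          · exfalso
            have : r + 1 = m.length := by omega
            have := SP_last_not_up ⟨mstep, mz, mutd, mkey⟩ this hi
            linarith
        rw [List.getElem?_append_left hr1]
        exact mutd r s hi hs
      · rw [List.getElem?_append_right hr] at hi
        have h2 := Lutd _ s hi hs
        rw [List.getElem?_append_right (by omega), show r + 1 - m.length = r - m.length + 1 by omega]
        exact h2
  · intro hzL hmem
    rcases List.mem_cons.mp hmem with h0 | hmem
    · omega
    rcases List.mem_cons.mp hmem with h0 | hmem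
    · norm_num at h0
    rcases List.mem_append.mp hmem with h | h
    · exact mz h
    · exact hzL h

lemma up_split' {w : List ℤ} (h : CP w) (hne : w ≠ [])
    (hpos : ∀ x : ℤ, w[0]? = some x → 1 ≤ x) :
    ∃ m L, SP m ∧ CP L ∧ ((0:ℤ) ∉ w → (0:ℤ) ∉ L) ∧
      w = (1 - m.sum) :: (-1:ℤ) :: (m ++ L) := by
  obtain ⟨⟨wstep, wpre, wsum⟩, wnf, wutd⟩ := h
  rcases w with _ | ⟨x, w1⟩
  · exact absurd rfl hne
  have hx : 1 ≤ x := hpos x rfl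
  have h1 : (x :: w1)[1]? = some (-1) := wutd 0 x rfl hx
  rcases w1 with _ | ⟨y, rest⟩
  · simp at h1
  simp only [List.getElem?_cons_succ, List.getElem?_cons_zero] at h1
  injection h1 with h1
  subst h1
  have hrsum : rest.sum = 1 - x := by
    simp only [List.sum_cons] at wsum
    linarith
  have hrstep : ∀ z ∈ rest, (-1:ℤ) ≤ z := fun z hz => wstep z (by simp [hz])
  have hrpre : ∀ i, 1 - x ≤ (rest.take i).sum := by
    intro i
    have := wpre (i + 2)
    simp only [List.take_succ_cons, List.sum_cons] at this
    linarith
  have hrutd : UpThenDown rest := by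
    have : (x :: (-1:ℤ) :: rest).drop 2 = rest := rfl
    rw [← this]
    exact utd_drop 2 wutd
  obtain ⟨j, hjlen, hjsum, hjmin⟩ := first_hit rest hrstep (1 - x) (le_of_eq hrsum)
    (by linarith)
  refine ⟨rest.take j, rest.drop j, ?_, ?_, ?_, ?_⟩
  · refine ⟨fun z hz => hrstep z (List.take_subset _ _ hz), ?_, ?_, ?_⟩
    · intro hmem
      obtain ⟨i, hi⟩ := List.mem_iff_getElem?.mp hmem
      have hilen : i < (rest.take j).length := by
        by_contra hc
        rw [List.getElem?_eq_none_iff.mpr (by omega)] at hi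
        cases hi
      have hij : i < j := by simp [List.length_take] at hilen; omega
      rw [List.getElem?_take_of_lt hij] at hi
      have hwi : (x :: (-1:ℤ) :: rest)[i + 2]? = some 0 := by
        simp only [List.getElem?_cons_succ]; exact hi
      have := wnf (i + 2) hwi
      simp only [List.take_succ_cons, List.sum_cons] at this
      have h2 := hjmin i hij
      linarith
    · refine utd_take j hrutd ?_
      intro s hj0 hgs
      have hsucc := List.sum_take_succ rest (j-1) (by omega)
      rw [List.getElem?_eq_getElem (by omega)] at hgs
      have hget : rest.get ⟨j-1, by omega⟩ = s := Option.some_injective _ hgs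
      rw [List.get_eq_getElem] at hget
      rw [hget, show j - 1 + 1 = j by omega, hjsum] at hsucc
      have := hjmin (j-1) (by omega)
      linarith
    · intro r hrlen
      have hrj : r < j := by simp [List.length_take] at hrlen; omega
      rw [List.take_take, min_eq_left hrj.le, hjsum]
      exact hjmin r hrj
  · refine ⟨⟨fun z hz => hrstep z (List.drop_subset _ _ hz), ?_, ?_⟩, ?_, utd_drop j hrutd⟩
    · intro i
      rw [take_drop_sum, hjsum]
      have := hrpre (j + i)
      linarith
    · have := List.sum_take_add_sum_drop rest j
      rw [hjsum] at this
      linarith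
    · intro i hi
      rw [List.getElem?_drop] at hi
      have hwi : (x :: (-1:ℤ) :: rest)[j + i + 2]? = some 0 := by
        simp only [List.getElem?_cons_succ]; exact hi
      have := wnf (j + i + 2) hwi
      simp only [List.take_succ_cons, List.sum_cons] at this
      rw [take_drop_sum, hjsum]
      linarith
  · intro hzw hmem
    exact hzw (by simp [List.drop_subset _ _ hmem])
  · have hms : (rest.take j).sum = 1 - x := hjsum
    have hxeq : x = 1 - (rest.take j).sum := by rw [hms]; ring
    rw [List.take_append_drop]
    rw [← hxeq]

-- chunk 4b
lemma up_inj' {m m' L L' : List ℤ} (hm : SP m) (hm' : SP m') (hL : CP L) (hL' : CP L')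
    (h : (1 - m.sum) :: (-1:ℤ) :: (m ++ L) = (1 - m'.sum) :: (-1:ℤ) :: (m' ++ L')) :
    m = m' ∧ L = L' := by
  have h1 : (1:ℤ) - m.sum = 1 - m'.sum := by injection h
  have hsum : m.sum = m'.sum := by linarith
  have h3 : m ++ L = m' ++ L' := by
    injection h with _ h2
    injection h2
  have key : ∀ (p p' q q' : List ℤ), SP p → SP p' → CP q → CP q' →
      p.sum = p'.sum → p ++ q = p' ++ q' → p.length < p'.length → False := by
    intro p p' q q' hp hp' hq hq' hps heq hlt
    have e1 : ((p ++ q).take p.length).sum = p.sum := by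
      rw [take_append_sum, List.take_of_length_le (le_refl _), Nat.sub_self]
      simp
    have e2 : ((p' ++ q').take p.length).sum = (p'.take p.length).sum := by
      rw [take_append_sum, show p.length - p'.length = 0 by omega]
      simp
    have := hp'.2.2.2 p.length hlt
    rw [heq, e2] at e1
    omega
  have hlen : m.length = m'.length := by
    rcases Nat.lt_trichotomy m.length m'.length with h' | h' | h'
    · exact absurd (key m m' L L' hm hm' hL hL' hsum h3 h') (by simp)
    · exact h'
    · exact absurd (key m' m L' L hm' hm hL' hL hsum.symm h3.symm h') (by simp)
  exact List.append_inj h3 hlen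

lemma flat_glue' {L : List ℤ} (hL : CP L) : CP ((0:ℤ) :: L) := by
  obtain ⟨⟨Lstep, Lpre, Lsum⟩, Lnf, Lutd⟩ := hL
  refine ⟨⟨?_, ?_, ?_⟩, ?_, ?_⟩
  · intro x hx
    rcases List.mem_cons.mp hx with rfl | hx
    · norm_num
    · exact Lstep x hx
  · intro k
    match k with
    | 0 => simp
    | (i+1) =>
      simp only [List.take_succ_cons, List.sum_cons]
      have := Lpre i
      linarith
  · simp [Lsum]
  · intro j hj
    match j with
    | 0 => simp
    | (i+1) =>
      simp only [List.getElem?_cons_succ] at hj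
      simp only [List.take_succ_cons, List.sum_cons, Lnf i hj]
      ring
  · intro i s hi hs
    match i with
    | 0 =>
      simp only [List.getElem?_cons_zero] at hi
      injection hi with hi; omega
    | (r+1) =>
      simp only [List.getElem?_cons_succ] at hi ⊢
      exact Lutd r s hi hs

lemma flat_split' {L : List ℤ} (h : CP ((0:ℤ) :: L)) : CP L := by
  obtain ⟨⟨wstep, wpre, wsum⟩, wnf, wutd⟩ := h
  refine ⟨⟨fun x hx => wstep x (by simp [hx]), ?_, ?_⟩, ?_, ?_⟩
  · intro k
    have := wpre (k+1)
    simpa using this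
  · simpa using wsum
  · intro j hj
    have := wnf (j+1) (by simpa using hj)
    simpa using this
  · intro i s hi hs
    have := wutd (i+1) s (by simpa using hi) hs
    simpa using this

lemma CbP_nil : CbP [] := ⟨CP_nil, by simp⟩


lemma SF_zero : SF 0 = {([] : List ℤ)} := by
  ext w
  simp only [mem_SF, Finset.mem_singleton, List.length_eq_zero_iff]
  constructor
  · rintro ⟨-, h⟩; exact h
  · rintro rfl; exact ⟨SP_nil, rfl⟩

lemma CF_zero : CF 0 = {([] : List ℤ)} := by
  ext w
  simp only [mem_CF, Finset.mem_singleton, List.length_eq_zero_iff]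
  constructor
  · rintro ⟨-, h⟩; exact h
  · rintro rfl; exact ⟨CP_nil, rfl⟩

lemma CbF_zero : CbF 0 = {([] : List ℤ)} := by
  ext w
  simp only [mem_CbF, Finset.mem_singleton, List.length_eq_zero_iff]
  constructor
  · rintro ⟨-, h⟩; exact h
  · rintro rfl; exact ⟨CbP_nil, rfl⟩

lemma CF_one : CF 1 = (CF 0).image (fun L => (0:ℤ) :: L) := by
  rw [CF_zero]
  ext w
  simp only [mem_CF, Finset.image_singleton, Finset.mem_singleton]
  constructor
  · rintro ⟨hcp, hlen⟩
    rcases w with _ | ⟨a, t⟩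
    · simp at hlen
    · have ht : t = [] := by simpa using hlen
      subst ht
      have : a = 0 := by simpa using hcp.1.2.2
      rw [this]
  · rintro rfl
    exact ⟨flat_glue' CP_nil, rfl⟩

lemma CbF_one : CbF 1 = ∅ := by
  ext w
  simp only [mem_CbF, Finset.notMem_empty, iff_false, not_and]
  rintro ⟨⟨⟨-, -, hsum⟩, -, -⟩, hz⟩ hlen
  rcases w with _ | ⟨a, t⟩
  · simp at hlen
  · have ht : t = [] := by simpa using hlen
    subst ht
    have : a = 0 := by simpa using hsum
    subst this
    exact hz (by simp)

lemma SF_succ (n : ℕ) : SF (n+1) = (Finset.HasAntidiagonal.antidiagonal n).biUnion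
    (fun p => ((CbF p.1) ×ˢ (SF p.2)).image
      (fun q : List ℤ × List ℤ => q.1 ++ (-1:ℤ) :: q.2)) := by
  ext w
  constructor
  · intro hw
    obtain ⟨hsp, hlen⟩ := mem_SF.mp hw
    obtain ⟨u, v, hu, hv, rfl⟩ := SP_split' hsp (by intro h; rw [h] at hlen; simp at hlen)
    refine Finset.mem_biUnion.mpr ⟨(u.length, v.length),
      Finset.HasAntidiagonal.mem_antidiagonal.mpr (by simp at hlen; omega),
      Finset.mem_image.mpr ⟨(u, v), Finset.mem_product.mpr
        ⟨mem_CbF.mpr ⟨hu, rfl⟩, mem_SF.mpr ⟨hv, rfl⟩⟩, rfl⟩⟩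
  · intro hw
    obtain ⟨p, hp, hw⟩ := Finset.mem_biUnion.mp hw
    obtain ⟨q, hq, rfl⟩ := Finset.mem_image.mp hw
    obtain ⟨h1, h2⟩ := Finset.mem_product.mp hq
    obtain ⟨hu, hlu⟩ := mem_CbF.mp h1
    obtain ⟨hv, hlv⟩ := mem_SF.mp h2
    refine mem_SF.mpr ⟨SP_glue' hu hv, ?_⟩
    have := Finset.HasAntidiagonal.mem_antidiagonal.mp hp
    simp only [List.length_append, List.length_cons, hlu, hlv]
    omega

lemma first_ge_one {w : List ℤ} (hcp : CP w) (hz : ∀ x : ℤ, w[0]? = some x → x ≠ 0) :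
    ∀ x : ℤ, w[0]? = some x → 1 ≤ x := by
  intro x hx
  have hmem : x ∈ w := List.mem_of_getElem? hx
  have h1 : -1 ≤ x := hcp.1.1 x hmem
  have hx0 : x ≠ 0 := hz x hx
  rcases w with _ | ⟨a, t⟩
  · simp at hx
  · simp only [List.getElem?_cons_zero] at hx
    injection hx with hx
    have h2 := hcp.1.2.1 1
    simp only [List.take_succ_cons, List.take_zero, List.sum_cons, List.sum_nil,
      add_zero] at h2
    omega

lemma CbF_succ2 (n : ℕ) : CbF (n+2) = (Finset.HasAntidiagonal.antidiagonal n).biUnion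
    (fun p => ((SF p.1) ×ˢ (CbF p.2)).image
      (fun q : List ℤ × List ℤ => (1 - q.1.sum) :: (-1:ℤ) :: (q.1 ++ q.2))) := by
  ext w
  constructor
  · intro hw
    obtain ⟨⟨hcp, hz⟩, hlen⟩ := mem_CbF.mp hw
    have hne : w ≠ [] := by intro h; rw [h] at hlen; simp at hlen
    have hpos : ∀ x : ℤ, w[0]? = some x → 1 ≤ x :=
      first_ge_one hcp (fun x hx h0 => hz (h0 ▸ List.mem_of_getElem? hx))
    obtain ⟨m, L, hm, hL, hzL, rfl⟩ := up_split' hcp hne hpos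
    refine Finset.mem_biUnion.mpr ⟨(m.length, L.length),
      Finset.HasAntidiagonal.mem_antidiagonal.mpr (by simp at hlen; omega),
      Finset.mem_image.mpr ⟨(m, L), Finset.mem_product.mpr
        ⟨mem_SF.mpr ⟨hm, rfl⟩, mem_CbF.mpr ⟨⟨hL, hzL hz⟩, rfl⟩⟩, rfl⟩⟩
  · intro hw
    obtain ⟨p, hp, hw⟩ := Finset.mem_biUnion.mp hw
    obtain ⟨q, hq, rfl⟩ := Finset.mem_image.mp hw
    obtain ⟨h1, h2⟩ := Finset.mem_product.mp hq
    obtain ⟨hm, hlm⟩ := mem_SF.mp h1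
    obtain ⟨⟨hL, hzL⟩, hlL⟩ := mem_CbF.mp h2
    obtain ⟨hcp, hz⟩ := up_glue' hm hL
    refine mem_CbF.mpr ⟨⟨hcp, hz hzL⟩, ?_⟩
    have := Finset.HasAntidiagonal.mem_antidiagonal.mp hp
    simp only [List.length_cons, List.length_append, hlm, hlL]
    omega

lemma CF_succ2 (n : ℕ) : CF (n+2) =
    (CF (n+1)).image (fun L => (0:ℤ) :: L) ∪
    (Finset.HasAntidiagonal.antidiagonal n).biUnion
      (fun p => ((SF p.1) ×ˢ (CF p.2)).image
        (fun q : List ℤ × List ℤ => (1 - q.1.sum) :: (-1:ℤ) :: (q.1 ++ q.2))) := by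
  ext w
  constructor
  · intro hw
    obtain ⟨hcp, hlen⟩ := mem_CF.mp hw
    have hne : w ≠ [] := by intro h; rw [h] at hlen; simp at hlen
    rw [Finset.mem_union]
    by_cases hx0 : w[0]? = some (0:ℤ)
    · rcases w with _ | ⟨x, t⟩
      · exact absurd rfl hne
      simp only [List.getElem?_cons_zero] at hx0
      injection hx0 with hx0
      subst hx0
      exact Or.inl (Finset.mem_image.mpr ⟨t,
        mem_CF.mpr ⟨flat_split' hcp, by simpa using hlen⟩, rfl⟩)
    · have hpos : ∀ x : ℤ, w[0]? = some x → 1 ≤ x := by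
        refine first_ge_one hcp ?_
        intro x hx h0
        exact hx0 (h0 ▸ hx)
      obtain ⟨m, L, hm, hL, -, rfl⟩ := up_split' hcp hne hpos
      refine Or.inr (Finset.mem_biUnion.mpr ⟨(m.length, L.length),
        Finset.HasAntidiagonal.mem_antidiagonal.mpr (by simp at hlen; omega),
        Finset.mem_image.mpr ⟨(m, L), Finset.mem_product.mpr
          ⟨mem_SF.mpr ⟨hm, rfl⟩, mem_CF.mpr ⟨hL, rfl⟩⟩, rfl⟩⟩)
  · intro hw
    rcases Finset.mem_union.mp hw with hw | hw
    · obtain ⟨L, hL, rfl⟩ := Finset.mem_image.mp hw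
      obtain ⟨hcp, hlen⟩ := mem_CF.mp hL
      exact mem_CF.mpr ⟨flat_glue' hcp, by simp [hlen]⟩
    · obtain ⟨p, hp, hw⟩ := Finset.mem_biUnion.mp hw
      obtain ⟨q, hq, rfl⟩ := Finset.mem_image.mp hw
      obtain ⟨h1, h2⟩ := Finset.mem_product.mp hq
      obtain ⟨hm, hlm⟩ := mem_SF.mp h1
      obtain ⟨hL, hlL⟩ := mem_CF.mp h2
      refine mem_CF.mpr ⟨(up_glue' hm hL).1, ?_⟩
      have := Finset.HasAntidiagonal.mem_antidiagonal.mp hp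
      simp only [List.length_cons, List.length_append, hlm, hlL]
      omega



-- chunk 6
lemma s_rec (n : ℕ) : (SF (n+1)).card =
    ∑ p ∈ Finset.HasAntidiagonal.antidiagonal n, (CbF p.1).card * (SF p.2).card := by
  rw [SF_succ, Finset.card_biUnion]
  · refine Finset.sum_congr rfl fun p hp => ?_
    rw [Finset.card_image_of_injOn, Finset.card_product]
    intro q hq q' hq' heq
    simp only [Finset.coe_product, Set.mem_prod, Finset.mem_coe] at hq hq'
    have h1 := (mem_CbF.mp hq.1).1
    have h2 := (mem_CbF.mp hq'.1).1
    obtain ⟨e1, e2⟩ := glue_inj' h1 h2 heq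
    exact Prod.ext e1 e2
  · intro p hp p' hp' hne
    rw [Function.onFun, Finset.disjoint_left]
    intro w hw hw'
    obtain ⟨q, hq, rfl⟩ := Finset.mem_image.mp hw
    obtain ⟨q', hq', heq⟩ := Finset.mem_image.mp hw'
    obtain ⟨h1, h2⟩ := Finset.mem_product.mp hq
    obtain ⟨h1', h2'⟩ := Finset.mem_product.mp hq'
    obtain ⟨e1, e2⟩ := glue_inj' (mem_CbF.mp h1').1 (mem_CbF.mp h1).1 heq
    apply hne
    have l1 := (mem_CbF.mp h1).2
    have l1' := (mem_CbF.mp h1').2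
    have l2 := (mem_SF.mp h2).2
    have l2' := (mem_SF.mp h2').2
    ext
    · rw [← l1, ← l1', e1]
    · rw [← l2, ← l2', e2]

lemma cb_rec (n : ℕ) : (CbF (n+2)).card =
    ∑ p ∈ Finset.HasAntidiagonal.antidiagonal n, (SF p.1).card * (CbF p.2).card := by
  rw [CbF_succ2, Finset.card_biUnion]
  · refine Finset.sum_congr rfl fun p hp => ?_
    rw [Finset.card_image_of_injOn, Finset.card_product]
    intro q hq q' hq' heq
    simp only [Finset.coe_product, Set.mem_prod, Finset.mem_coe] at hq hq'
    have h1 := (mem_SF.mp hq.1).1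
    have h2 := (mem_SF.mp hq'.1).1
    obtain ⟨e1, e2⟩ := up_inj' h1 h2 (mem_CbF.mp hq.2).1.1 (mem_CbF.mp hq'.2).1.1 heq
    exact Prod.ext e1 e2
  · intro p hp p' hp' hne
    rw [Function.onFun, Finset.disjoint_left]
    intro w hw hw'
    obtain ⟨q, hq, rfl⟩ := Finset.mem_image.mp hw
    obtain ⟨q', hq', heq⟩ := Finset.mem_image.mp hw'
    obtain ⟨h1, h2⟩ := Finset.mem_product.mp hq
    obtain ⟨h1', h2'⟩ := Finset.mem_product.mp hq'
    obtain ⟨e1, e2⟩ := up_inj' (mem_SF.mp h1').1 (mem_SF.mp h1).1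
      (mem_CbF.mp h2').1.1 (mem_CbF.mp h2).1.1 heq
    apply hne
    ext
    · rw [← (mem_SF.mp h1).2, ← (mem_SF.mp h1').2, e1]
    · rw [← (mem_CbF.mp h2).2, ← (mem_CbF.mp h2').2, e2]

lemma cF_image_card (p : ℕ × ℕ) :
    (((SF p.1) ×ˢ (CF p.2)).image
      (fun q : List ℤ × List ℤ => (1 - q.1.sum) :: (-1:ℤ) :: (q.1 ++ q.2))).card
    = (SF p.1).card * (CF p.2).card := by
  rw [Finset.card_image_of_injOn, Finset.card_product]
  intro q hq q' hq' heq
  simp only [Finset.coe_product, Set.mem_prod, Finset.mem_coe] at hq hq'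
  obtain ⟨e1, e2⟩ := up_inj' (mem_SF.mp hq.1).1 (mem_SF.mp hq'.1).1
    (mem_CF.mp hq.2).1 (mem_CF.mp hq'.2).1 heq
  exact Prod.ext e1 e2

lemma c_rec (n : ℕ) : (CF (n+2)).card =
    (CF (n+1)).card + ∑ p ∈ Finset.HasAntidiagonal.antidiagonal n, (SF p.1).card * (CF p.2).card := by
  have hdisj0 : Disjoint ((CF (n+1)).image (fun L => (0:ℤ) :: L))
      ((Finset.HasAntidiagonal.antidiagonal n).biUnion
        (fun p => ((SF p.1) ×ˢ (CF p.2)).image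
          (fun q : List ℤ × List ℤ => (1 - q.1.sum) :: (-1:ℤ) :: (q.1 ++ q.2)))) := by
    rw [Finset.disjoint_left]
    intro w hw hw'
    obtain ⟨L, hL, rfl⟩ := Finset.mem_image.mp hw
    obtain ⟨p, hp, hw'⟩ := Finset.mem_biUnion.mp hw'
    obtain ⟨q, hq, heq⟩ := Finset.mem_image.mp hw'
    obtain ⟨h1, h2⟩ := Finset.mem_product.mp hq
    have := SP_sum_nonpos (mem_SF.mp h1).1
    have hhead : (1 : ℤ) - q.1.sum = 0 := by injection heq
    omega
  have hpair : ∀ p ∈ Finset.HasAntidiagonal.antidiagonal n, ∀ p' ∈ Finset.HasAntidiagonal.antidiagonal n, p ≠ p' →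
      Disjoint (((SF p.1) ×ˢ (CF p.2)).image
          (fun q : List ℤ × List ℤ => (1 - q.1.sum) :: (-1:ℤ) :: (q.1 ++ q.2)))
        (((SF p'.1) ×ˢ (CF p'.2)).image
          (fun q : List ℤ × List ℤ => (1 - q.1.sum) :: (-1:ℤ) :: (q.1 ++ q.2))) := by
    intro p hp p' hp' hne
    rw [Finset.disjoint_left]
    intro w hw hw'
    obtain ⟨q, hq, rfl⟩ := Finset.mem_image.mp hw
    obtain ⟨q', hq', heq⟩ := Finset.mem_image.mp hw'
    obtain ⟨h1, h2⟩ := Finset.mem_product.mp hq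
    obtain ⟨h1', h2'⟩ := Finset.mem_product.mp hq'
    obtain ⟨e1, e2⟩ := up_inj' (mem_SF.mp h1').1 (mem_SF.mp h1).1
      (mem_CF.mp h2').1 (mem_CF.mp h2).1 heq
    apply hne
    ext
    · rw [← (mem_SF.mp h1).2, ← (mem_SF.mp h1').2, e1]
    · rw [← (mem_CF.mp h2).2, ← (mem_CF.mp h2').2, e2]
  rw [CF_succ2, Finset.card_union_of_disjoint hdisj0,
    Finset.card_image_of_injective _ (List.cons_injective),
    Finset.card_biUnion hpair]
  congr 1
  exact Finset.sum_congr rfl fun p _ => cF_image_card p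



noncomputable def Cs : PowerSeries ℚ := PowerSeries.mk fun n => ((CF n).card : ℚ)
noncomputable def Cbs : PowerSeries ℚ := PowerSeries.mk fun n => ((CbF n).card : ℚ)
noncomputable def Ss : PowerSeries ℚ := PowerSeries.mk fun n => ((SF n).card : ℚ)

lemma card_CF_zero : (CF 0).card = 1 := by rw [CF_zero]; rfl
lemma card_CbF_zero : (CbF 0).card = 1 := by rw [CbF_zero]; rfl
lemma card_SF_zero : (SF 0).card = 1 := by rw [SF_zero]; rfl
lemma card_CF_one : (CF 1).card = (CF 0).card := by
  rw [CF_one, Finset.card_image_of_injective _ (List.cons_injective)]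
lemma card_CbF_one : (CbF 1).card = 0 := by rw [CbF_one]; rfl

lemma hS_eq : Ss = 1 + X * (Cbs * Ss) := by
  ext n
  rcases n with _ | n
  · simp [Ss, coeff_mk, card_SF_zero]
  · rw [map_add, PowerSeries.coeff_succ_X_mul, PowerSeries.coeff_mul]
    simp only [Ss, Cbs, coeff_mk]
    rw [PowerSeries.coeff_one, s_rec n]
    push_cast
    simp

lemma hCb_eq : Cbs = 1 + X^2 * (Ss * Cbs) := by
  ext n
  rcases n with _ | _ | n
  · simp [Cbs, coeff_mk, card_CbF_zero]
  · rw [map_add, show (X:PowerSeries ℚ)^2 * (Ss * Cbs) = X * (X * (Ss * Cbs)) by ring,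
      PowerSeries.coeff_succ_X_mul]
    simp [Cbs, coeff_mk, card_CbF_one, PowerSeries.coeff_one]
  · rw [map_add, show (X:PowerSeries ℚ)^2 * (Ss * Cbs) = X * (X * (Ss * Cbs)) by ring,
      PowerSeries.coeff_succ_X_mul, PowerSeries.coeff_succ_X_mul, PowerSeries.coeff_mul]
    simp only [Cbs, Ss, coeff_mk]
    rw [PowerSeries.coeff_one, cb_rec n]
    push_cast
    simp

lemma hC_eq : Cs = 1 + X * Cs + X^2 * (Ss * Cs) := by
  ext n
  rcases n with _ | _ | n
  · simp [Cs, coeff_mk, card_CF_zero]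
  · rw [map_add, map_add, show (X:PowerSeries ℚ)^2 * (Ss * Cs) = X * (X * (Ss * Cs)) by ring,
      PowerSeries.coeff_succ_X_mul, PowerSeries.coeff_succ_X_mul]
    simp only [Cs, coeff_mk]
    rw [PowerSeries.coeff_one, card_CF_one]
    simp [card_CF_zero]
  · rw [map_add, map_add, show (X:PowerSeries ℚ)^2 * (Ss * Cs) = X * (X * (Ss * Cs)) by ring,
      PowerSeries.coeff_succ_X_mul, PowerSeries.coeff_succ_X_mul,
      PowerSeries.coeff_succ_X_mul, PowerSeries.coeff_mul]
    simp only [Cs, Ss, coeff_mk]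
    rw [PowerSeries.coeff_one, c_rec n]
    push_cast
    simp

end LukasAux


open LukasAux in
/-- The counting generating functions `C` (Łukasiewicz paths with no flat at
positive height and every up step followed by a down step) and `C̄` (the same
paths without any flat step) satisfy, as formal power series,
`C = 1 + x C + x² C / (1 - x C̄)` and `C̄ = 1 + x Σ_{k≥1} x^k C̄^k`
(both stated multiplied through by the unit `1 - x C̄`), and `C` is given by the
closed form `C = (1 - x + x² + y) / (1 - 2x - x³ + (1-x) y)` where
`y = √(1 - 2x - x² - 2x³ + x⁴)` is the power series with `y² = 1 - 2x - x² - 2x³ + x⁴`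
and constant coefficient `1` (stated multiplied through by the denominator). -/
theorem genfun_C :
    ∃ C Cb y : PowerSeries ℚ,
      (∀ n : ℕ, (PowerSeries.coeff n) C =
        Set.ncard {w : List ℤ | IsLukas w ∧ NoFlatAtPosHeight w ∧
          UpThenDown w ∧ w.length = n}) ∧
      (∀ n : ℕ, (PowerSeries.coeff n) Cb =
        Set.ncard {w : List ℤ | IsLukas w ∧ NoFlatAtPosHeight w ∧
          UpThenDown w ∧ (0 : ℤ) ∉ w ∧ w.length = n}) ∧
      C * (1 - X * Cb) = (1 + X * C) * (1 - X * Cb) + X ^ 2 * C ∧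
      Cb * (1 - X * Cb) = (1 - X * Cb) + X ^ 2 * Cb ∧
      y ^ 2 = 1 - 2 * X - X ^ 2 - 2 * X ^ 3 + X ^ 4 ∧
      PowerSeries.constantCoeff y = 1 ∧
      C * (1 - 2 * X - X ^ 3 + (1 - X) * y) = 1 - X + X ^ 2 + y := by

  have hunit : Ss * (1 - X * Cbs) = 1 := by linear_combination hS_eq
  have eq1 : Cs * (1 - X * Cbs) = (1 + X * Cs) * (1 - X * Cbs) + X ^ 2 * Cs := by
    linear_combination (1 - X * Cbs) * hC_eq + (X^2 * Cs) * hunit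
  have eq2 : Cbs * (1 - X * Cbs) = (1 - X * Cbs) + X ^ 2 * Cbs := by
    linear_combination (1 - X * Cbs) * hCb_eq + (X^2 * Cbs) * hunit
  refine ⟨Cs, Cbs, 1 + X - X^2 - 2*X*Cbs, ?_, ?_, eq1, eq2, ?_, ?_, ?_⟩
  · intro n
    have hset : {w : List ℤ | IsLukas w ∧ NoFlatAtPosHeight w ∧
        UpThenDown w ∧ w.length = n} = ↑(CF n) := by
      ext w
      simp only [Set.mem_setOf_eq, Finset.coe_sort_coe, Finset.mem_coe, mem_CF, CP]
      tauto
    rw [hset, Set.ncard_coe_finset]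
    simp [Cs, coeff_mk]
  · intro n
    have hset : {w : List ℤ | IsLukas w ∧ NoFlatAtPosHeight w ∧
        UpThenDown w ∧ (0:ℤ) ∉ w ∧ w.length = n} = ↑(CbF n) := by
      ext w
      simp only [Set.mem_setOf_eq, Finset.coe_sort_coe, Finset.mem_coe, mem_CbF, CbP, CP]
      tauto
    rw [hset, Set.ncard_coe_finset]
    simp [Cbs, coeff_mk]
  · linear_combination (-4*X) * eq2
  · simp [map_add, map_sub, map_mul, PowerSeries.constantCoeff_X]
  · linear_combination (1 - X + X^2 + (1 + X - X^2 - 2*X*Cbs)) * hC_eq +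
      2 * X^2 * Cs * hunit
end

section
/- The map ψ restricts to a bijection between the set E_n of Łukasiewicz paths of length n in which every up step is immediately followed by a flat step and every flat step at positive height is immediately preceded by an up step, and the set of Motzkin paths of length n avoiding both consecutive patterns UU and UD. -/
set_option maxHeartbeats 1000000


/-- A Motzkin path: a Łukasiewicz path using only steps `(1,1)`, `(1,0)`, `(1,-1)`. -/
def IsMotzkin (w : List ℤ) : Prop :=
  IsLukas w ∧ ∀ s ∈ w, s ≤ 1

/-- Every up step is immediately followed by a flat step. -/
def UpThenFlat (w : List ℤ) : Prop :=
  ∀ j : ℕ, ∀ s : ℤ, w[j]? = some s → 1 ≤ s → w[j + 1]? = some 0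

/-- Every flat step at positive height is immediately preceded by an up step. -/
def FlatPosHeightAfterUp (w : List ℤ) : Prop :=
  ∀ j : ℕ, w[j + 1]? = some 0 → 0 < (w.take (j + 1)).sum →
    ∃ s : ℤ, w[j]? = some s ∧ 1 ≤ s

/-- Avoiding the consecutive pattern `UU`. -/
def AvoidsUU (w : List ℤ) : Prop :=
  ∀ j : ℕ, ¬(w[j]? = some 1 ∧ w[j + 1]? = some 1)

/-- Avoiding the consecutive pattern `UD`. -/
def AvoidsUD (w : List ℤ) : Prop :=
  ∀ j : ℕ, ¬(w[j]? = some 1 ∧ w[j + 1]? = some (-1))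

/-- `ψ` satisfies the defining recursive equations: `ψ(ε) = ε`,
`ψ(F L) = F ψ(L)`, and
`ψ(U_k L₁ D L₂ D … L_k D L) = U ψ(L₁) F ψ(L₂) F … ψ(L_k) D ψ(L)`. -/
def PsiEquations (ψ : List ℤ → List ℤ) : Prop :=
  ψ [] = [] ∧
  (∀ L : List ℤ, IsLukas L → ψ (0 :: L) = 0 :: ψ L) ∧
  (∀ (Ls : List (List ℤ)) (L : List ℤ), Ls ≠ [] →
    (∀ M ∈ Ls, IsLukas M) → IsLukas L →
    ψ ((Ls.length : ℤ) :: ((Ls.map fun M => M ++ [(-1 : ℤ)]).flatten ++ L)) =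
      1 :: ((List.intersperse [(0 : ℤ)] (Ls.map ψ)).flatten ++ (-1 : ℤ) :: ψ L))

namespace PsiBij

open List

/-! ### Basic list helpers -/

lemma sum_take_append (a b : List ℤ) (m : ℕ) :
    ((a ++ b).take m).sum = (a.take m).sum + (b.take (m - a.length)).sum := by
  rw [List.take_append, List.sum_append]

/-- Lower bound on all partial sums. -/
def NNlb (c : ℤ) (l : List ℤ) : Prop := ∀ m, c ≤ (l.take m).sum

lemma nnlb_append {c c' c'' : ℤ} {a b : List ℤ} (h1 : NNlb c a) (h2 : NNlb c' b)
    (h3 : c'' ≤ c) (h4 : c'' ≤ a.sum + c') : NNlb c'' (a ++ b) := by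
  intro m
  rw [sum_take_append]
  rcases le_or_gt m a.length with h | h
  · have hz : m - a.length = 0 := by omega
    rw [hz]
    simpa using le_trans h3 (h1 m)
  · rw [List.take_of_length_le (le_of_lt h)]
    have := h2 (m - a.length)
    linarith

lemma nnlb_cons {c c' x : ℤ} {l : List ℤ} (h : NNlb c l) (h0 : c' ≤ 0) (h1 : c' ≤ x + c) :
    NNlb c' (x :: l) := by
  intro m
  cases m with
  | zero => simpa using h0
  | succ m =>
    have := h m
    simp only [List.take_succ_cons, List.sum_cons]
    linarith

lemma nnlb_nil (c : ℤ) (hc : c ≤ 0) : NNlb c [] := by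
  intro m; simpa using hc

lemma lukas_nnlb {w : List ℤ} (h : IsLukas w) : NNlb 0 w := h.2.1

lemma isLukas_nil : IsLukas ([] : List ℤ) := ⟨by simp, by simp, by simp⟩

lemma isLukas_zero_cons {l : List ℤ} (h : IsLukas l) : IsLukas (0 :: l) := by
  refine ⟨?_, nnlb_cons (lukas_nnlb h) le_rfl (by simp), by simp [h.2.2]⟩
  intro s hs
  rcases List.mem_cons.1 hs with rfl | hs
  · norm_num
  · exact h.1 s hs

lemma isLukas_of_zero_cons {l : List ℤ} (h : IsLukas (0 :: l)) : IsLukas l := by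
  refine ⟨fun s hs => h.1 s (List.mem_cons_of_mem _ hs), ?_, ?_⟩
  · intro m
    have := h.2.1 (m + 1)
    simpa using this
  · have := h.2.2; simpa using this

/-! ### Bodies -/

def Pbody (Cs : List (List ℤ)) : List ℤ := (Cs.map (fun C => C ++ [(-1 : ℤ)])).flatten

def Qbody (qs : List (List ℤ)) : List ℤ := (qs.map (fun q => (0 : ℤ) :: q)).flatten

@[simp] lemma Pbody_nil : Pbody [] = [] := rfl
@[simp] lemma Pbody_cons (C : List ℤ) (Cs : List (List ℤ)) :
    Pbody (C :: Cs) = (C ++ [(-1 : ℤ)]) ++ Pbody Cs := by simp [Pbody]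
@[simp] lemma Qbody_nil : Qbody [] = [] := rfl
@[simp] lemma Qbody_cons (q : List ℤ) (qs : List (List ℤ)) :
    Qbody (q :: qs) = ((0 : ℤ) :: q) ++ Qbody qs := by simp [Qbody]

lemma Pbody_sum {Cs : List (List ℤ)} (h : ∀ C ∈ Cs, IsLukas C) :
    (Pbody Cs).sum = -(Cs.length : ℤ) := by
  induction Cs with
  | nil => simp
  | cons C Cs ih =>
    have h1 := (h C (by simp)).2.2
    have h2 := ih (fun C hC => h C (by simp [hC]))
    simp only [Pbody_cons, List.sum_append, List.sum_cons, List.sum_nil, h1, h2, List.length_cons]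
    push_cast; ring

lemma Pbody_nnlb {Cs : List (List ℤ)} (h : ∀ C ∈ Cs, IsLukas C) :
    NNlb (-(Cs.length : ℤ)) (Pbody Cs) := by
  induction Cs with
  | nil => exact nnlb_nil _ (by simp)
  | cons C Cs ih =>
    have h1 := (h C (by simp))
    have h2 := ih (fun C hC => h C (by simp [hC]))
    rw [Pbody_cons]
    have hC1 : NNlb (-1) (C ++ [(-1 : ℤ)]) := by
      refine nnlb_append (lukas_nnlb h1) (c' := -1) ?_ (by norm_num) (by rw [h1.2.2]; norm_num)
      intro m; rcases m with _ | m <;> simp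
    refine nnlb_append hC1 h2 (by simp only [List.length_cons]; push_cast; omega) ?_
    have : (C ++ [(-1:ℤ)]).sum = -1 := by simp [h1.2.2]
    rw [this]
    simp only [List.length_cons]; push_cast; omega

lemma Pbody_mem {Cs : List (List ℤ)} (h : ∀ C ∈ Cs, IsLukas C) :
    ∀ s ∈ Pbody Cs, -1 ≤ s := by
  intro s hs
  simp only [Pbody, List.mem_flatten, List.mem_map] at hs
  obtain ⟨l, ⟨C, hC, rfl⟩, hsl⟩ := hs
  rcases List.mem_append.1 hsl with h' | h'
  · exact (h C hC).1 s h'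
  · simp at h'; omega

lemma Qbody_sum {qs : List (List ℤ)} (h : ∀ q ∈ qs, IsLukas q) : (Qbody qs).sum = 0 := by
  induction qs with
  | nil => simp
  | cons q qs ih =>
    have h1 := (h q (by simp)).2.2
    have h2 := ih (fun q hq => h q (by simp [hq]))
    simp [h1, h2]

lemma Qbody_nnlb {qs : List (List ℤ)} (h : ∀ q ∈ qs, IsLukas q) : NNlb 0 (Qbody qs) := by
  induction qs with
  | nil => exact nnlb_nil _ le_rfl
  | cons q qs ih =>
    have h1 := h q (by simp)
    have h2 := ih (fun q hq => h q (by simp [hq]))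
    rw [Qbody_cons]
    refine nnlb_append (nnlb_cons (lukas_nnlb h1) le_rfl (by simp)) h2 le_rfl ?_
    simp [h1.2.2]

lemma Qbody_mem {qs : List (List ℤ)} (h : ∀ q ∈ qs, ∀ s ∈ q, -1 ≤ s ∧ s ≤ 1) :
    ∀ s ∈ Qbody qs, -1 ≤ s ∧ s ≤ 1 := by
  intro s hs
  simp only [Qbody, List.mem_flatten, List.mem_map] at hs
  obtain ⟨l, ⟨q, hq, rfl⟩, hsl⟩ := hs
  rcases List.mem_cons.1 hsl with rfl | h'
  · norm_num
  · exact h q hq s h'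

/-! ### Grammars -/

inductive PP : List ℤ → Prop where
  | nil : PP []
  | arch (C₁ : List ℤ) (Cs : List (List ℤ)) (C : List ℤ) :
      PP C₁ → (∀ M ∈ Cs, PP M) → PP C →
      PP (((Cs.length : ℤ) + 1) :: 0 :: (C₁ ++ (-1 : ℤ) :: (Pbody Cs ++ C)))

inductive EE : List ℤ → Prop where
  | nil : EE []
  | flat (L : List ℤ) : EE L → EE (0 :: L)
  | arch (C₁ : List ℤ) (Cs : List (List ℤ)) (L : List ℤ) :
      PP C₁ → (∀ M ∈ Cs, PP M) → EE L →
      EE (((Cs.length : ℤ) + 1) :: 0 :: (C₁ ++ (-1 : ℤ) :: (Pbody Cs ++ L)))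

inductive QQ : List ℤ → Prop where
  | nil : QQ []
  | arch (q₁ : List ℤ) (qs : List (List ℤ)) (t : List ℤ) :
      QQ q₁ → (∀ m ∈ qs, QQ m) → QQ t →
      QQ (1 :: 0 :: (q₁ ++ Qbody qs ++ (-1 : ℤ) :: t))

inductive TT : List ℤ → Prop where
  | nil : TT []
  | flat (t : List ℤ) : TT t → TT (0 :: t)
  | arch (q₁ : List ℤ) (qs : List (List ℤ)) (t : List ℤ) :
      QQ q₁ → (∀ m ∈ qs, QQ m) → TT t →
      TT (1 :: 0 :: (q₁ ++ Qbody qs ++ (-1 : ℤ) :: t))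

end PsiBij
namespace PsiBij
open List

/-! ### get? helpers -/

lemma get?_off (u v : List ℤ) (j : ℕ) : (u ++ v)[u.length + j]? = v[j]? := by
  rw [List.getElem?_append_right (Nat.le_add_right _ _)]
  congr 1
  omega

lemma get?_len (a b : List ℤ) : (a ++ b)[a.length]? = b[0]? := by
  simpa using get?_off a b 0

lemma get?_mid {M : List ℤ} (u v : List ℤ) {j : ℕ} (h : j < M.length) :
    (u ++ (M ++ v))[u.length + j]? = M[j]? := by
  rw [get?_off, List.getElem?_append_left h]

lemma get?_some_lt {w : List ℤ} {j : ℕ} {s : ℤ} (h : w[j]? = some s) : j < w.length :=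
  (List.getElem?_eq_some_iff.1 h).1

/-- the "all flats after up" predicate -/
def PF (w : List ℤ) : Prop :=
  ∀ j : ℕ, w[j]? = some 0 → ∃ i s, j = i + 1 ∧ w[i]? = some s ∧ 1 ≤ s

/-- the "no zero at zero height" predicate -/
def NBZ (w : List ℤ) : Prop := ∀ j : ℕ, w[j]? = some 0 → 0 < (w.take j).sum

/-! ### UTF composition -/

lemma utf_nil : UpThenFlat [] := by intro j s h; simp at h

lemma utf_append {a b : List ℤ} (ha : UpThenFlat a) (hb : UpThenFlat b) :
    UpThenFlat (a ++ b) := by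
  intro j s hj hs
  rcases lt_or_ge j a.length with h | h
  · rw [List.getElem?_append_left h] at hj
    have h2 := ha j s hj hs
    rw [List.getElem?_append_left (get?_some_lt h2)]
    exact h2
  · obtain ⟨p, rfl⟩ : ∃ p, j = a.length + p := ⟨j - a.length, by omega⟩
    rw [get?_off] at hj
    have h2 := hb p s hj hs
    have : a.length + p + 1 = a.length + (p + 1) := by omega
    rw [this, get?_off]
    exact h2

lemma utf_cons_nonpos {x : ℤ} {l : List ℤ} (hx : x ≤ 0) (h : UpThenFlat l) :
    UpThenFlat (x :: l) := by
  intro j s hj hs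
  cases j with
  | zero => simp at hj; omega
  | succ j =>
    have := h j s (by simpa using hj) hs
    simpa using this

lemma utf_cons_up {x : ℤ} {l : List ℤ} (h0 : l[0]? = some 0) (h : UpThenFlat l) :
    UpThenFlat (x :: l) := by
  intro j s hj hs
  cases j with
  | zero => simpa using h0
  | succ j =>
    have := h j s (by simpa using hj) hs
    simpa using this

lemma utf_neg : UpThenFlat [(-1 : ℤ)] := utf_cons_nonpos (by norm_num) utf_nil

lemma utf_suffix {u v : List ℤ} (h : UpThenFlat (u ++ v)) : UpThenFlat v := by
  intro j s hj hs
  have h2 := h (u.length + j) s (by rw [get?_off]; exact hj) hs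
  rw [show u.length + j + 1 = u.length + (j + 1) by omega, get?_off] at h2
  exact h2

lemma utf_mid {u M v' : List ℤ} (h : UpThenFlat (u ++ (M ++ (-1 : ℤ) :: v'))) :
    UpThenFlat M := by
  intro j s hj hs
  have hjl : j < M.length := get?_some_lt hj
  have h2 := h (u.length + j) s (by rw [get?_mid u _ hjl]; exact hj) hs
  rcases lt_or_ge (j + 1) M.length with hlt | hge
  · rw [show u.length + j + 1 = u.length + (j + 1) by omega, get?_mid u _ hlt] at h2
    exact h2
  · exfalso
    have hj1 : j + 1 = M.length := by omega
    have h2' : ((u ++ M) ++ ((-1 : ℤ) :: v'))[(u ++ M).length]? = some 0 := by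
      rw [show (u ++ M) ++ ((-1 : ℤ) :: v') = u ++ (M ++ (-1 : ℤ) :: v') by simp,
        show (u ++ M).length = u.length + j + 1 by simp; omega]
      exact h2
    rw [get?_len] at h2'
    simp at h2'

/-! ### PF composition -/

lemma pf_nil : PF [] := by intro j h; simp at h

lemma pf_append {a b : List ℤ} (ha : PF a) (hb : PF b) : PF (a ++ b) := by
  intro j hj
  rcases lt_or_ge j a.length with h | h
  · rw [List.getElem?_append_left h] at hj
    obtain ⟨i, s, hji, hi, hs⟩ := ha j hj
    exact ⟨i, s, hji, by rw [List.getElem?_append_left (by omega)]; exact hi, hs⟩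
  · obtain ⟨p, rfl⟩ : ∃ p, j = a.length + p := ⟨j - a.length, by omega⟩
    rw [get?_off] at hj
    obtain ⟨i, s, hji, hi, hs⟩ := hb p hj
    exact ⟨a.length + i, s, by omega, by rw [get?_off]; exact hi, hs⟩

lemma pf_cons_ne {x : ℤ} {l : List ℤ} (hx : x ≠ 0) (h : PF l) : PF (x :: l) := by
  intro j hj
  cases j with
  | zero => simp at hj; exact absurd hj hx
  | succ j =>
    obtain ⟨i, s, hji, hi, hs⟩ := h j (by simpa using hj)
    exact ⟨i + 1, s, by omega, by simpa using hi, hs⟩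

lemma pf_neg : PF [(-1 : ℤ)] := pf_cons_ne (by norm_num) pf_nil

lemma pf_up_zero {k : ℤ} {l : List ℤ} (hk : 1 ≤ k) (h : PF l) : PF (k :: 0 :: l) := by
  intro j hj
  match j with
  | 0 => simp at hj; omega
  | 1 => exact ⟨0, k, rfl, by simp, hk⟩
  | (j + 2) =>
    obtain ⟨i, s, hji, hi, hs⟩ := h j (by simpa using hj)
    exact ⟨i + 2, s, by omega, by simpa using hi, hs⟩

/-! ### FPHAU composition -/

lemma fphau_single (x : ℤ) : FlatPosHeightAfterUp [x] := by
  intro j hj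
  rw [show ([x] : List ℤ)[j+1]? = [][j]? from rfl] at hj
  simp at hj

lemma fphau_append {u v : List ℤ} (hu : FlatPosHeightAfterUp u) (hus : u.sum = 0)
    (hv : FlatPosHeightAfterUp v) : FlatPosHeightAfterUp (u ++ v) := by
  intro j hj hpos
  rcases lt_or_ge (j + 1) u.length with h | h
  · rw [List.getElem?_append_left h] at hj
    rw [sum_take_append, show j + 1 - u.length = 0 by omega] at hpos
    simp only [List.take_zero, List.sum_nil, add_zero] at hpos
    obtain ⟨s, hi, hs⟩ := hu j hj hpos
    exact ⟨s, by rw [List.getElem?_append_left (by omega)]; exact hi, hs⟩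
  · rcases eq_or_lt_of_le h with heq | hlt
    · exfalso
      rw [sum_take_append, show j + 1 - u.length = 0 by omega,
        List.take_of_length_le (by omega)] at hpos
      simp [hus] at hpos
    · obtain ⟨p, hp⟩ : ∃ p, j = u.length + p := ⟨j - u.length, by omega⟩
      subst hp
      rw [show u.length + p + 1 = u.length + (p + 1) by omega, get?_off] at hj
      rw [show u.length + p + 1 = u.length + (p + 1) by omega, sum_take_append,
        List.take_of_length_le (by omega), hus, show u.length + (p+1) - u.length = p + 1 by omega]
        at hpos
      simp only [zero_add] at hpos
      obtain ⟨s, hi, hs⟩ := hv p hj hpos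
      exact ⟨s, by rw [get?_off]; exact hi, hs⟩

lemma fphau_arch_head {k : ℤ} {r : List ℤ} (hk : 1 ≤ k) (hr : PF r) :
    FlatPosHeightAfterUp (k :: 0 :: r) := by
  intro j hj _
  match j with
  | 0 => exact ⟨k, rfl, hk⟩
  | (j + 1) =>
    obtain ⟨i, s, hji, hi, hs⟩ := hr j (by simpa using hj)
    subst hji
    exact ⟨s, by simpa using hi, hs⟩

lemma fphau_suffix {u v : List ℤ} (h : FlatPosHeightAfterUp (u ++ v)) (hus : 0 ≤ u.sum) :
    FlatPosHeightAfterUp v := by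
  intro j hj hpos
  have h0 : (u ++ v)[(u.length + j) + 1]? = some 0 := by
    rw [show u.length + j + 1 = u.length + (j + 1) by omega, get?_off]; exact hj
  have h1 : 0 < ((u ++ v).take ((u.length + j) + 1)).sum := by
    rw [show u.length + j + 1 = u.length + (j + 1) by omega, sum_take_append,
      List.take_of_length_le (by omega), show u.length + (j+1) - u.length = j + 1 by omega]
    linarith
  obtain ⟨s, hi, hs⟩ := h (u.length + j) h0 h1
  rw [get?_off] at hi
  exact ⟨s, hi, hs⟩

/-! ### transfer lemmas : extracting components -/

lemma pf_of_fphau {u M v : List ℤ} (h : FlatPosHeightAfterUp (u ++ (M ++ v)))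
    (hz : ∃ z, u[u.length - 1]? = some z ∧ z ≤ 0) (hus : 1 ≤ u.sum)
    (hM : NNlb 0 M) : PF M := by
  obtain ⟨z, hzget, hzle⟩ := hz
  have hul : 1 ≤ u.length := by
    have := get?_some_lt hzget; omega
  intro j hj
  have hjl : j < M.length := get?_some_lt hj
  have h0 : (u ++ (M ++ v))[(u.length + j - 1) + 1]? = some 0 := by
    rw [show u.length + j - 1 + 1 = u.length + j by omega, get?_mid u _ hjl]
    exact hj
  have h1 : 0 < ((u ++ (M ++ v)).take ((u.length + j - 1) + 1)).sum := by
    rw [show u.length + j - 1 + 1 = u.length + j by omega, sum_take_append,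
      List.take_of_length_le (by omega), show u.length + j - u.length = j by omega,
      sum_take_append, show j - M.length = 0 by omega]
    simp only [List.take_zero, List.sum_nil, add_zero]
    linarith [hM j]
  obtain ⟨s, hi, hs⟩ := h _ h0 h1
  cases Nat.eq_zero_or_pos j with
  | inl h0' =>
    exfalso
    subst h0'
    rw [show u.length + 0 - 1 = u.length - 1 by omega, List.getElem?_append_left (by omega)] at hi
    rw [hzget] at hi
    have : z = s := by injection hi
    omega
  | inr hposj =>
    refine ⟨j - 1, s, by omega, ?_, hs⟩
    rw [show u.length + j - 1 = u.length + (j - 1) by omega, get?_mid u _ (by omega)] at hi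
    exact hi

lemma pf_mid {u M v : List ℤ} (h : PF (u ++ (M ++ v)))
    (hz : ∃ z, u[u.length - 1]? = some z ∧ z ≤ 0) : PF M := by
  obtain ⟨z, hzget, hzle⟩ := hz
  have hul : 1 ≤ u.length := by have := get?_some_lt hzget; omega
  intro j hj
  have hjl : j < M.length := get?_some_lt hj
  have h0 : (u ++ (M ++ v))[u.length + j]? = some 0 := by
    rw [get?_mid u _ hjl]; exact hj
  obtain ⟨i, s, hji, hi, hs⟩ := h _ h0
  cases Nat.eq_zero_or_pos j with
  | inl h0' =>
    exfalso
    subst h0'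
    have hiu : i = u.length - 1 := by omega
    subst hiu
    rw [List.getElem?_append_left (by omega), hzget] at hi
    have : z = s := by injection hi
    omega
  | inr hposj =>
    refine ⟨j - 1, s, by omega, ?_, hs⟩
    have : i = u.length + (j - 1) := by omega
    subst this
    rw [get?_mid u _ (by omega)] at hi
    exact hi

end PsiBij
namespace PsiBij
open List

/-! ### grammar → analytic -/

lemma Qbody_mem_lb {qs : List (List ℤ)} (h : ∀ q ∈ qs, ∀ s ∈ q, -1 ≤ s) :
    ∀ s ∈ Qbody qs, -1 ≤ s := by
  intro s hs
  simp only [Qbody, List.mem_flatten, List.mem_map] at hs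
  obtain ⟨l, ⟨q, hq, rfl⟩, hsl⟩ := hs
  rcases List.mem_cons.1 hsl with rfl | h'
  · norm_num
  · exact h q hq s h'

lemma lukas_arch {C₁ : List ℤ} {Cs : List (List ℤ)} {L : List ℤ}
    (h1 : IsLukas C₁) (h2 : ∀ C ∈ Cs, IsLukas C) (h3 : IsLukas L) :
    IsLukas (((Cs.length : ℤ) + 1) :: 0 :: (C₁ ++ (-1 : ℤ) :: (Pbody Cs ++ L))) := by
  have hPb := Pbody_sum h2
  have hco : (0:ℤ) ≤ (Cs.length : ℤ) := by positivity
  refine ⟨?_, ?_, ?_⟩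
  · intro s hs
    simp only [List.mem_cons, List.mem_append] at hs
    rcases hs with rfl | rfl | hs | rfl | hs | hs
    · omega
    · norm_num
    · exact h1.1 s hs
    · norm_num
    · exact Pbody_mem h2 s hs
    · exact h3.1 s hs
  · have n1 : NNlb (-(Cs.length:ℤ)) (Pbody Cs ++ L) :=
      nnlb_append (Pbody_nnlb h2) (lukas_nnlb h3) le_rfl (by rw [hPb]; omega)
    have n2 : NNlb (-(Cs.length:ℤ)-1) ((-1:ℤ) :: (Pbody Cs ++ L)) :=
      nnlb_cons n1 (by omega) (by omega)
    have n3 : NNlb (-(Cs.length:ℤ)-1) (C₁ ++ ((-1:ℤ) :: (Pbody Cs ++ L))) :=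
      nnlb_append (lukas_nnlb h1) n2 (by omega) (by rw [h1.2.2]; omega)
    have n4 : NNlb (-(Cs.length:ℤ)-1) ((0:ℤ) :: (C₁ ++ ((-1:ℤ) :: (Pbody Cs ++ L)))) :=
      nnlb_cons n3 (by omega) (by omega)
    exact nnlb_cons n4 le_rfl (by omega)
  · simp only [List.sum_cons, List.sum_append, h1.2.2, h3.2.2, hPb]
    ring

lemma lukas_qarch {q₁ : List ℤ} {qs : List (List ℤ)} {t : List ℤ}
    (h1 : IsLukas q₁) (h2 : ∀ q ∈ qs, IsLukas q) (h3 : IsLukas t) :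
    IsLukas (1 :: 0 :: (q₁ ++ Qbody qs ++ (-1 : ℤ) :: t)) := by
  have hQb := Qbody_sum h2
  refine ⟨?_, ?_, ?_⟩
  · intro s hs
    simp only [List.mem_cons, List.mem_append] at hs
    rcases hs with rfl | rfl | (hs | hs) | rfl | hs
    · norm_num
    · norm_num
    · exact h1.1 s hs
    · exact Qbody_mem_lb (fun q hq => (h2 q hq).1) s hs
    · norm_num
    · exact h3.1 s hs
  · have n1 : NNlb (-1) ((-1:ℤ) :: t) := nnlb_cons (lukas_nnlb h3) (by omega) (by omega)
    have n2 : NNlb (-1) (Qbody qs ++ ((-1:ℤ) :: t)) :=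
      nnlb_append (Qbody_nnlb h2) n1 (by omega) (by rw [hQb]; omega)
    have n3 : NNlb (-1) (q₁ ++ (Qbody qs ++ ((-1:ℤ) :: t))) :=
      nnlb_append (lukas_nnlb h1) n2 (by omega) (by rw [h1.2.2]; omega)
    have n4 : NNlb (-1) ((0:ℤ) :: (q₁ ++ (Qbody qs ++ ((-1:ℤ) :: t)))) :=
      nnlb_cons n3 (by omega) (by omega)
    have n5 : NNlb 0 ((1:ℤ) :: 0 :: (q₁ ++ (Qbody qs ++ ((-1:ℤ) :: t)))) :=
      nnlb_cons n4 le_rfl (by omega)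
    intro m
    have := n5 m
    simpa [List.append_assoc] using this
  · simp only [List.sum_cons, List.sum_append, h1.2.2, h3.2.2, hQb]
    ring

lemma pp_lukas {C : List ℤ} (h : PP C) : IsLukas C := by
  induction h with
  | nil => exact isLukas_nil
  | arch C₁ Cs C _ _ _ ih1 ihs ih => exact lukas_arch ih1 ihs ih

lemma ee_lukas {w : List ℤ} (h : EE w) : IsLukas w := by
  induction h with
  | nil => exact isLukas_nil
  | flat L _ ih => exact isLukas_zero_cons ih
  | arch C₁ Cs L h1 hs _ ih =>
    exact lukas_arch (pp_lukas h1) (fun M hM => pp_lukas (hs M hM)) ih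

lemma qq_motzkin {q : List ℤ} (h : QQ q) : IsLukas q ∧ ∀ s ∈ q, s ≤ 1 := by
  induction h with
  | nil => exact ⟨isLukas_nil, by simp⟩
  | arch q₁ qs t _ _ _ ih1 ihs ih =>
    constructor
    · exact lukas_qarch ih1.1 (fun q hq => (ihs q hq).1) ih.1
    · intro s hs
      simp only [List.mem_cons, List.mem_append] at hs
      rcases hs with rfl | rfl | (hs | hs) | rfl | hs
      · norm_num
      · norm_num
      · exact ih1.2 s hs
      · exact (Qbody_mem (fun q hq s hs => ⟨((ihs q hq).1).1 s hs, (ihs q hq).2 s hs⟩) s hs).2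
      · norm_num
      · exact ih.2 s hs

lemma tt_motzkin {t : List ℤ} (h : TT t) : IsLukas t ∧ ∀ s ∈ t, s ≤ 1 := by
  induction h with
  | nil => exact ⟨isLukas_nil, by simp⟩
  | flat t _ ih =>
    refine ⟨isLukas_zero_cons ih.1, ?_⟩
    intro s hs
    rcases List.mem_cons.1 hs with rfl | hs
    · norm_num
    · exact ih.2 s hs
  | arch q₁ qs t h1 hs _ ih =>
    have m1 := qq_motzkin h1
    have ms := fun q hq => qq_motzkin (hs q hq)
    constructor
    · exact lukas_qarch m1.1 (fun q hq => (ms q hq).1) ih.1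
    · intro s hsm
      simp only [List.mem_cons, List.mem_append] at hsm
      rcases hsm with rfl | rfl | (hsm | hsm) | rfl | hsm
      · norm_num
      · norm_num
      · exact m1.2 s hsm
      · exact (Qbody_mem (fun q hq s hs => ⟨((ms q hq).1).1 s hs, (ms q hq).2 s hs⟩) s hsm).2
      · norm_num
      · exact ih.2 s hsm

lemma utf_pbody {Cs : List (List ℤ)} (h : ∀ C ∈ Cs, UpThenFlat C) :
    UpThenFlat (Pbody Cs) := by
  induction Cs with
  | nil => exact utf_nil
  | cons C Cs ih =>
    rw [Pbody_cons]
    exact utf_append (utf_append (h C (by simp)) utf_neg) (ih fun C hC => h C (by simp [hC]))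

lemma pf_pbody {Cs : List (List ℤ)} (h : ∀ C ∈ Cs, PF C) : PF (Pbody Cs) := by
  induction Cs with
  | nil => exact pf_nil
  | cons C Cs ih =>
    rw [Pbody_cons]
    exact pf_append (pf_append (h C (by simp)) pf_neg) (ih fun C hC => h C (by simp [hC]))

lemma utf_qbody {qs : List (List ℤ)} (h : ∀ q ∈ qs, UpThenFlat q) :
    UpThenFlat (Qbody qs) := by
  induction qs with
  | nil => exact utf_nil
  | cons q qs ih =>
    rw [Qbody_cons]
    exact utf_append (utf_cons_nonpos le_rfl (h q (by simp))) (ih fun q hq => h q (by simp [hq]))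

lemma pp_utf {C : List ℤ} (h : PP C) : UpThenFlat C := by
  induction h with
  | nil => exact utf_nil
  | arch C₁ Cs C _ _ _ ih1 ihs ih =>
    have hbody : UpThenFlat (C₁ ++ (-1:ℤ) :: (Pbody Cs ++ C)) :=
      utf_append ih1 (utf_cons_nonpos (by norm_num) (utf_append (utf_pbody ihs) ih))
    exact utf_cons_up (by simp) (utf_cons_nonpos le_rfl hbody)

lemma ee_utf {w : List ℤ} (h : EE w) : UpThenFlat w := by
  induction h with
  | nil => exact utf_nil
  | flat L _ ih => exact utf_cons_nonpos le_rfl ih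
  | arch C₁ Cs L h1 hs _ ih =>
    have hbody : UpThenFlat (C₁ ++ (-1:ℤ) :: (Pbody Cs ++ L)) :=
      utf_append (pp_utf h1)
        (utf_cons_nonpos (by norm_num) (utf_append (utf_pbody fun M hM => pp_utf (hs M hM)) ih))
    exact utf_cons_up (by simp) (utf_cons_nonpos le_rfl hbody)

lemma qq_utf {q : List ℤ} (h : QQ q) : UpThenFlat q := by
  induction h with
  | nil => exact utf_nil
  | arch q₁ qs t _ _ _ ih1 ihs ih =>
    have hbody : UpThenFlat (q₁ ++ Qbody qs ++ (-1:ℤ) :: t) :=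
      utf_append (utf_append ih1 (utf_qbody ihs)) (utf_cons_nonpos (by norm_num) ih)
    exact utf_cons_up (by simp) (utf_cons_nonpos le_rfl hbody)

lemma tt_utf {t : List ℤ} (h : TT t) : UpThenFlat t := by
  induction h with
  | nil => exact utf_nil
  | flat t _ ih => exact utf_cons_nonpos le_rfl ih
  | arch q₁ qs t h1 hs _ ih =>
    have hbody : UpThenFlat (q₁ ++ Qbody qs ++ (-1:ℤ) :: t) :=
      utf_append (utf_append (qq_utf h1) (utf_qbody fun q hq => qq_utf (hs q hq)))
        (utf_cons_nonpos (by norm_num) ih)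
    exact utf_cons_up (by simp) (utf_cons_nonpos le_rfl hbody)

lemma pp_pf {C : List ℤ} (h : PP C) : PF C := by
  induction h with
  | nil => exact pf_nil
  | arch C₁ Cs C _ _ _ ih1 ihs ih =>
    have hc : (1:ℤ) ≤ (Cs.length : ℤ) + 1 := by omega
    exact pf_up_zero hc (pf_append ih1 (pf_cons_ne (by norm_num) (pf_append (pf_pbody ihs) ih)))

lemma fphau_nil : FlatPosHeightAfterUp [] := by
  intro j hj; simp at hj

lemma ee_fphau {w : List ℤ} (h : EE w) : FlatPosHeightAfterUp w := by
  induction h with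
  | nil => exact fphau_nil
  | flat L _ ih => exact fphau_append (fphau_single 0) (by simp) ih
  | arch C₁ Cs L h1 hs hL ih =>
    have hc : (1:ℤ) ≤ (Cs.length : ℤ) + 1 := by omega
    have hu : FlatPosHeightAfterUp (((Cs.length:ℤ)+1) :: 0 :: (C₁ ++ (-1:ℤ) :: Pbody Cs)) :=
      fphau_arch_head hc
        (pf_append (pp_pf h1) (pf_cons_ne (by norm_num) (pf_pbody fun M hM => pp_pf (hs M hM))))
    have hsum : (((Cs.length:ℤ)+1) :: 0 :: (C₁ ++ (-1:ℤ) :: Pbody Cs)).sum = 0 := by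
      simp only [List.sum_cons, List.sum_append, (pp_lukas h1).2.2,
        Pbody_sum fun M hM => pp_lukas (hs M hM)]
      ring
    have heq : (((Cs.length:ℤ)+1) :: 0 :: (C₁ ++ (-1:ℤ) :: Pbody Cs)) ++ L =
        ((Cs.length:ℤ)+1) :: 0 :: (C₁ ++ (-1:ℤ) :: (Pbody Cs ++ L)) := by simp
    exact heq ▸ fphau_append hu hsum ih

lemma qq_nbz {q : List ℤ} (h : QQ q) : NBZ q := by
  induction h with
  | nil => intro j hj; simp at hj
  | arch q₁ qs t h1 hs _ ih1 ihs ihq =>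
    have hm1 := qq_motzkin h1
    have hmid : NNlb 0 (q₁ ++ Qbody qs) :=
      nnlb_append (lukas_nnlb hm1.1) (Qbody_nnlb fun q hq => (qq_motzkin (hs q hq)).1) le_rfl
        (by rw [hm1.1.2.2]; omega)
    have hmids : (q₁ ++ Qbody qs).sum = 0 := by
      rw [List.sum_append, hm1.1.2.2, Qbody_sum fun q hq => (qq_motzkin (hs q hq)).1]; ring
    intro j hj
    set mid := q₁ ++ Qbody qs with hmiddef
    have hshape : (1 :: 0 :: (q₁ ++ Qbody qs ++ (-1:ℤ) :: t)) =
        (1:ℤ) :: 0 :: (mid ++ (-1:ℤ) :: t) := by simp [hmiddef]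
    rw [hshape] at hj ⊢
    match j, hj with
    | 0, hj => simp at hj
    | 1, hj => simp
    | (p + 2), hj =>
      have hj' : (mid ++ (-1:ℤ) :: t)[p]? = some 0 := by simpa using hj
      have htake : ((1:ℤ) :: 0 :: (mid ++ (-1:ℤ) :: t)).take (p + 2) =
          1 :: 0 :: ((mid ++ (-1:ℤ) :: t).take p) := by simp
      rw [htake]
      simp only [List.sum_cons]
      rcases le_or_gt p mid.length with hp | hp
      · rw [sum_take_append, show p - mid.length = 0 by omega]
        have := hmid p
        simp only [List.take_zero, List.sum_nil, add_zero]
        omega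
      · obtain ⟨r, hr⟩ : ∃ r, p = mid.length + (r + 1) := ⟨p - mid.length - 1, by omega⟩
        subst hr
        rw [sum_take_append, List.take_of_length_le (by omega),
          show mid.length + (r + 1) - mid.length = r + 1 by omega]
        have hj'' : t[r]? = some 0 := by
          rw [show mid.length + (r + 1) = mid.length + (r + 1) by rfl, get?_off] at hj'
          simpa using hj'
        have := ihq r hj''
        simp only [List.take_succ_cons, List.sum_cons, hmids]
        omega

end PsiBij
namespace PsiBij
open List

/-! ### decomposition -/

lemma firstReturn (B : List ℤ) (hmem : ∀ s ∈ B, -1 ≤ s) (hneg : B.sum < 0) :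
    ∃ a t, B = a ++ (-1 : ℤ) :: t ∧ IsLukas a := by
  classical
  have hex : ∃ m, (B.take m).sum < 0 := ⟨B.length, by simpa using hneg⟩
  set m := Nat.find hex with hmdef
  have hms : (B.take m).sum < 0 := Nat.find_spec hex
  have hmin : ∀ j < m, 0 ≤ (B.take j).sum := fun j hj => le_of_not_gt (Nat.find_min hex hj)
  have hm1 : 1 ≤ m := by
    rcases Nat.eq_zero_or_pos m with h0 | h
    · rw [h0] at hms; simp at hms
    · exact h
  have hlen : m - 1 < B.length := by
    by_contra hc
    push_neg at hc
    have h1 : (B.take (m-1)).sum = B.sum := by rw [List.take_of_length_le hc]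
    have h2 : 0 ≤ (B.take (m-1)).sum := hmin _ (by omega)
    omega
  have hstep : (B.take m).sum = (B.take (m-1)).sum + B.get ⟨m-1, hlen⟩ := by
    have := List.sum_take_succ B (m-1) hlen
    rw [show m - 1 + 1 = m by omega] at this
    exact this
  have hgm : -1 ≤ B.get ⟨m-1, hlen⟩ := hmem _ (B.get_mem _)
  have h0 : 0 ≤ (B.take (m-1)).sum := hmin _ (by omega)
  have hsum0 : (B.take (m-1)).sum = 0 := by omega
  have hgeq : B.get ⟨m-1, hlen⟩ = -1 := by omega
  refine ⟨B.take (m-1), B.drop m, ?_, ?_, ?_, hsum0⟩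
  · have h1 : B = B.take (m-1) ++ B.drop (m-1) := (List.take_append_drop _ _).symm
    have h2 : B.drop (m-1) = B.get ⟨m-1, hlen⟩ :: B.drop (m-1+1) := List.drop_eq_getElem_cons hlen
    rw [hgeq, show m - 1 + 1 = m by omega] at h2
    rw [← h2]
    exact h1
  · exact fun s hs => hmem s (List.take_subset _ _ hs)
  · intro j
    rw [List.take_take]
    exact hmin _ (by omega)

lemma decomp : ∀ (k : ℕ) (B : List ℤ), (∀ s ∈ B, -1 ≤ s) →
    (∀ m, -(k : ℤ) ≤ (B.take m).sum) → B.sum = -(k : ℤ) →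
    ∃ (Ls : List (List ℤ)) (L : List ℤ), Ls.length = k ∧ (∀ M ∈ Ls, IsLukas M) ∧ IsLukas L ∧
      B = (Ls.map (fun M => M ++ [(-1 : ℤ)])).flatten ++ L := by
  intro k
  induction k with
  | zero =>
    intro B h1 h2 h3
    exact ⟨[], B, rfl, by simp, ⟨h1, fun m => by simpa using h2 m, by simpa using h3⟩, by simp⟩
  | succ k ih =>
    intro B h1 h2 h3
    obtain ⟨a, t, hBat, hA⟩ := firstReturn B h1 (by rw [h3]; push_cast; omega)
    have ht1 : ∀ s ∈ t, -1 ≤ s := fun s hs => h1 s (by rw [hBat]; simp [hs])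
    have htsum : t.sum = -(k : ℤ) := by
      have h := h3
      rw [hBat] at h
      simp only [List.sum_append, List.sum_cons, hA.2.2] at h
      push_cast at h ⊢
      omega
    have ht2 : ∀ m, -(k : ℤ) ≤ (t.take m).sum := by
      intro m
      have h := h2 (a.length + (1 + m))
      rw [hBat, sum_take_append, List.take_of_length_le (by omega),
        show a.length + (1 + m) - a.length = m + 1 by omega] at h
      simp only [List.take_succ_cons, List.sum_cons, hA.2.2] at h
      push_cast at h ⊢
      omega
    obtain ⟨Ls, L, hlen, hLuk, hLukL, hflat⟩ := ih t ht1 ht2 htsum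
    refine ⟨a :: Ls, L, by simp [hlen], ?_, hLukL, ?_⟩
    · intro M hM
      rcases List.mem_cons.1 hM with rfl | hM
      · exact hA
      · exact hLuk M hM
    · rw [hBat, hflat]
      simp

/-! ### peel lemmas -/

lemma len_lt_pbody {M : List ℤ} {Cs : List (List ℤ)} (h : M ∈ Cs) :
    M.length < (Pbody Cs).length := by
  induction Cs with
  | nil => simp at h
  | cons C Cs ih =>
    rw [Pbody_cons, List.length_append, List.length_append]
    rcases List.mem_cons.1 h with rfl | h
    · simp only [List.length_append, List.length_cons, List.length_nil]; omega
    · have := ih h; omega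

lemma pbody_ends {Cs : List (List ℤ)} (h : Cs ≠ []) :
    ∃ pre, Pbody Cs = pre ++ [(-1 : ℤ)] := by
  induction Cs with
  | nil => simp at h
  | cons C Cs ih =>
    rcases Cs with _ | ⟨C', Cs'⟩
    · exact ⟨C, by simp⟩
    · obtain ⟨pre, hpre⟩ := ih (by simp)
      exact ⟨C ++ [(-1:ℤ)] ++ pre, by rw [Pbody_cons, hpre]; simp⟩

lemma peel_utf : ∀ (Cs : List (List ℤ)) (u L : List ℤ),
    UpThenFlat (u ++ (Pbody Cs ++ L)) → ∀ M ∈ Cs, UpThenFlat M := by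
  intro Cs
  induction Cs with
  | nil => simp
  | cons C Cs ih =>
    intro u L h M hM
    rcases List.mem_cons.1 hM with rfl | hM
    · refine utf_mid (u := u) (v' := Pbody Cs ++ L) ?_
      rw [show u ++ (M ++ (-1:ℤ) :: (Pbody Cs ++ L)) = u ++ (Pbody (M :: Cs) ++ L) by simp]
      exact h
    · refine ih (u ++ (C ++ [(-1:ℤ)])) L ?_ M hM
      rw [show (u ++ (C ++ [(-1:ℤ)])) ++ (Pbody Cs ++ L) = u ++ (Pbody (C :: Cs) ++ L) by simp]
      exact h

lemma peel_pf_of_fphau : ∀ (Cs : List (List ℤ)) (u L : List ℤ),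
    FlatPosHeightAfterUp (u ++ (Pbody Cs ++ L)) →
    (∃ z, u[u.length - 1]? = some z ∧ z ≤ 0) →
    (Cs.length : ℤ) ≤ u.sum → (∀ M ∈ Cs, IsLukas M) → ∀ M ∈ Cs, PF M := by
  intro Cs
  induction Cs with
  | nil => simp
  | cons C Cs ih =>
    intro u L h hz hsum hluk M hM
    have hsC : C.sum = 0 := (hluk C (by simp)).2.2
    rcases List.mem_cons.1 hM with rfl | hM
    · refine pf_of_fphau (u := u) (v := (-1:ℤ) :: (Pbody Cs ++ L)) ?_ hz ?_
        (lukas_nnlb (hluk M (by simp)))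
      · rw [show u ++ (M ++ (-1:ℤ) :: (Pbody Cs ++ L)) = u ++ (Pbody (M :: Cs) ++ L) by simp]
        exact h
      · simp only [List.length_cons] at hsum
        push_cast at hsum
        omega
    · refine ih (u ++ (C ++ [(-1:ℤ)])) L ?_ ?_ ?_ (fun M hM => hluk M (by simp [hM])) M hM
      · rw [show (u ++ (C ++ [(-1:ℤ)])) ++ (Pbody Cs ++ L) = u ++ (Pbody (C :: Cs) ++ L) by simp]
        exact h
      · refine ⟨-1, ?_, by norm_num⟩
        have hsh : u ++ (C ++ [(-1:ℤ)]) = (u ++ C) ++ [(-1:ℤ)] := by simp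
        rw [hsh, show ((u ++ C) ++ [(-1:ℤ)]).length - 1 = (u ++ C).length by simp]
        exact List.getElem?_concat_length
      · simp only [List.sum_append, List.sum_cons, List.sum_nil, hsC,
          List.length_cons] at hsum ⊢
        push_cast at hsum ⊢
        omega

lemma peel_pf_of_pf : ∀ (Cs : List (List ℤ)) (u L : List ℤ),
    PF (u ++ (Pbody Cs ++ L)) →
    (∃ z, u[u.length - 1]? = some z ∧ z ≤ 0) → ∀ M ∈ Cs, PF M := by
  intro Cs
  induction Cs with
  | nil => simp
  | cons C Cs ih =>
    intro u L h hz M hM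
    rcases List.mem_cons.1 hM with rfl | hM
    · refine pf_mid (u := u) (v := (-1:ℤ) :: (Pbody Cs ++ L)) ?_ hz
      rw [show u ++ (M ++ (-1:ℤ) :: (Pbody Cs ++ L)) = u ++ (Pbody (M :: Cs) ++ L) by simp]
      exact h
    · refine ih (u ++ (C ++ [(-1:ℤ)])) L ?_ ?_ M hM
      · rw [show (u ++ (C ++ [(-1:ℤ)])) ++ (Pbody Cs ++ L) = u ++ (Pbody (C :: Cs) ++ L) by simp]
        exact h
      · refine ⟨-1, ?_, by norm_num⟩
        have hsh : u ++ (C ++ [(-1:ℤ)]) = (u ++ C) ++ [(-1:ℤ)] := by simp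
        rw [hsh, show ((u ++ C) ++ [(-1:ℤ)]).length - 1 = (u ++ C).length by simp]
        exact List.getElem?_concat_length

end PsiBij
namespace PsiBij
open List

lemma sum_take_succ_get? : ∀ {w : List ℤ} {j : ℕ} {s : ℤ}, w[j]? = some s →
    (w.take (j + 1)).sum = (w.take j).sum + s := by
  intro w
  induction w with
  | nil => intro j s h; simp at h
  | cons a l ih =>
    intro j s h
    cases j with
    | zero => simp at h; simp [h]
    | succ j =>
      have := ih (by simpa using h)
      simp only [List.take_succ_cons, List.sum_cons]
      omega

lemma last_neg {u pre : List ℤ} (h : u = pre ++ [(-1 : ℤ)]) :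
    ∃ z, u[u.length - 1]? = some z ∧ z ≤ 0 := by
  refine ⟨-1, ?_, by norm_num⟩
  rw [h, show (pre ++ [(-1:ℤ)]).length - 1 = pre.length by simp]
  exact List.getElem?_concat_length

/-! ### the master splitting lemma -/

lemma split_arch {x : ℤ} {r : List ℤ}
    (hL : IsLukas (x :: r)) (hU : UpThenFlat (x :: r)) (hx : 1 ≤ x) :
    ∃ (C₁ : List ℤ) (Cs : List (List ℤ)) (L : List ℤ),
      (x :: r) = ((Cs.length : ℤ) + 1) :: 0 :: (C₁ ++ (-1 : ℤ) :: (Pbody Cs ++ L)) ∧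
      IsLukas C₁ ∧ (∀ M ∈ Cs, IsLukas M) ∧ IsLukas L ∧
      UpThenFlat C₁ ∧ (∀ M ∈ Cs, UpThenFlat M) ∧ UpThenFlat L ∧
      C₁.length + 3 ≤ (x :: r).length ∧ (∀ M ∈ Cs, M.length + 3 ≤ (x :: r).length) ∧
      L.length + 3 ≤ (x :: r).length ∧
      (FlatPosHeightAfterUp (x :: r) → PF C₁ ∧ (∀ M ∈ Cs, PF M) ∧ FlatPosHeightAfterUp L) ∧
      (PF (x :: r) → PF C₁ ∧ (∀ M ∈ Cs, PF M) ∧ PF L) := by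
  have hk : x = ((x.toNat : ℕ) : ℤ) := (Int.toNat_of_nonneg (by omega)).symm
  set k := x.toNat with hkdef
  have hk1 : 1 ≤ k := by omega
  have hr1 : ∀ s ∈ r, -1 ≤ s := fun s hs => hL.1 s (List.mem_cons_of_mem _ hs)
  have hr2 : ∀ m, -(k : ℤ) ≤ (r.take m).sum := by
    intro m
    have h := hL.2.1 (m + 1)
    simp only [List.take_succ_cons, List.sum_cons] at h
    omega
  have hr3 : r.sum = -(k : ℤ) := by
    have h := hL.2.2
    simp only [List.sum_cons] at h
    omega
  obtain ⟨Ls, L, hlen, hLuk, hLukL, hflat⟩ := decomp k r hr1 hr2 hr3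
  rcases Ls with _ | ⟨L₁, Cs⟩
  · exfalso; simp at hlen; omega
  have hget1 : (x :: r)[1]? = some 0 := hU 0 x rfl hx
  have hr0 : r[0]? = some 0 := by simpa using hget1
  rcases L₁ with _ | ⟨y, C₁⟩
  · exfalso; rw [hflat] at hr0; simp at hr0
  have hy : y = 0 := by
    rw [hflat] at hr0
    simp at hr0
    omega
  subst hy
  have hcs : Cs.length + 1 = k := by simpa using hlen
  have hxlen : x = (Cs.length : ℤ) + 1 := by rw [hk, ← hcs]; push_cast; ring
  have hLC₁ : IsLukas C₁ := isLukas_of_zero_cons (hLuk _ (by simp))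
  have hCs : ∀ M ∈ Cs, IsLukas M := fun M hM => hLuk M (by simp [hM])
  have hshape : (x :: r) = ((Cs.length : ℤ) + 1) :: 0 :: (C₁ ++ (-1:ℤ) :: (Pbody Cs ++ L)) := by
    rw [hxlen, hflat]; simp [Pbody]
  have hsh1 : (x :: r) = [x, 0] ++ (C₁ ++ (-1:ℤ) :: (Pbody Cs ++ L)) := by
    rw [hflat]; simp [Pbody]
  have hsh2 : (x :: r) = ([x, 0] ++ (C₁ ++ [(-1:ℤ)])) ++ (Pbody Cs ++ L) := by
    rw [hflat]; simp [Pbody]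
  have hsh3 : (x :: r) = ([x, 0] ++ C₁ ++ [(-1:ℤ)] ++ Pbody Cs) ++ L := by
    rw [hflat]; simp [Pbody]
  have hUC₁ : UpThenFlat C₁ := utf_mid (u := [x, 0]) (v' := Pbody Cs ++ L) (hsh1 ▸ hU)
  have hUCs : ∀ M ∈ Cs, UpThenFlat M := peel_utf Cs _ _ (hsh2 ▸ hU)
  have hUL : UpThenFlat L := utf_suffix (hsh3 ▸ hU)
  have hlen_eq : (x :: r).length = C₁.length + (Pbody Cs).length + L.length + 3 := by
    rw [hshape]
    simp only [List.length_cons, List.length_append]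
    omega
  have hmid : ∃ z, ([x, 0] ++ (C₁ ++ [(-1:ℤ)]))[([x, 0] ++ (C₁ ++ [(-1:ℤ)])).length - 1]?
      = some z ∧ z ≤ 0 := last_neg (pre := [x, 0] ++ C₁) (by simp)
  have hend : ∃ z, ([x, 0] ++ C₁ ++ [(-1:ℤ)] ++ Pbody Cs)[
      ([x, 0] ++ C₁ ++ [(-1:ℤ)] ++ Pbody Cs).length - 1]? = some z ∧ z ≤ 0 := by
    rcases Cs with _ | ⟨C', Cs'⟩
    · exact last_neg (pre := [x, 0] ++ C₁) (by simp)
    · obtain ⟨pre, hpre⟩ := pbody_ends (Cs := C' :: Cs') (by simp)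
      exact last_neg (pre := [x, 0] ++ C₁ ++ [(-1:ℤ)] ++ pre) (by rw [hpre]; simp)
  refine ⟨C₁, Cs, L, hshape, hLC₁, hCs, hLukL, hUC₁, hUCs, hUL,
    by omega, fun M hM => by have := len_lt_pbody hM; omega, by omega, ?_, ?_⟩
  · intro hF
    refine ⟨?_, ?_, ?_⟩
    · exact pf_of_fphau (hsh1 ▸ hF) ⟨0, by simp, le_rfl⟩ (by simp; omega) (lukas_nnlb hLC₁)
    · refine peel_pf_of_fphau Cs _ L (hsh2 ▸ hF) hmid ?_ hCs
      simp only [List.sum_append, List.sum_cons, List.sum_nil, hLC₁.2.2]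
      omega
    · refine fphau_suffix (hsh3 ▸ hF) ?_
      simp only [List.sum_append, List.sum_cons, List.sum_nil, hLC₁.2.2, Pbody_sum hCs]
      omega
  · intro hP
    refine ⟨?_, ?_, ?_⟩
    · exact pf_mid (hsh1 ▸ hP) ⟨0, by simp, le_rfl⟩
    · exact peel_pf_of_pf Cs _ L (hsh2 ▸ hP) hmid
    · refine pf_mid (u := [x, 0] ++ C₁ ++ [(-1:ℤ)] ++ Pbody Cs) (M := L) (v := []) ?_ hend
      rw [show ([x, 0] ++ C₁ ++ [(-1:ℤ)] ++ Pbody Cs) ++ (L ++ []) =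
        ([x, 0] ++ C₁ ++ [(-1:ℤ)] ++ Pbody Cs) ++ L by simp]
      exact hsh3 ▸ hP

/-! ### analytic → grammar -/

lemma toPP : ∀ (n : ℕ) (w : List ℤ), w.length ≤ n →
    IsLukas w → UpThenFlat w → PF w → PP w := by
  intro n
  induction n with
  | zero =>
    intro w hlen _ _ _
    have hw : w = [] := List.length_eq_zero_iff.1 (by omega)
    rw [hw]
    exact PP.nil
  | succ n ih =>
    intro w hlen hL hU hP
    rcases w with _ | ⟨x, r⟩
    · exact PP.nil
    · have hx0 : 0 ≤ x := by have := hL.2.1 1; simpa using this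
      have hxne : x ≠ 0 := by
        intro h
        subst h
        obtain ⟨i, s, hji, _, _⟩ := hP 0 rfl
        omega
      have hx : 1 ≤ x := by omega
      obtain ⟨C₁, Cs, L, hshape, hLC₁, hLCs, hLL, hUC₁, hUCs, hUL, hlen1, hlenCs, hlenL, _,
        hPFpart⟩ := split_arch hL hU hx
      obtain ⟨hPC₁, hPCs, hPL⟩ := hPFpart hP
      rw [hshape]
      exact PP.arch C₁ Cs L
        (ih C₁ (by simp only [List.length_cons] at hlen hlen1 ⊢; omega) hLC₁ hUC₁ hPC₁)
        (fun M hM => ih M (by have := hlenCs M hM; simp only [List.length_cons] at hlen this; omega)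
          (hLCs M hM) (hUCs M hM) (hPCs M hM))
        (ih L (by simp only [List.length_cons] at hlen hlenL; omega) hLL hUL hPL)

lemma toEE : ∀ (n : ℕ) (w : List ℤ), w.length ≤ n →
    IsLukas w → UpThenFlat w → FlatPosHeightAfterUp w → EE w := by
  intro n
  induction n with
  | zero =>
    intro w hlen _ _ _
    have hw : w = [] := List.length_eq_zero_iff.1 (by omega)
    rw [hw]
    exact EE.nil
  | succ n ih =>
    intro w hlen hL hU hF
    rcases w with _ | ⟨x, r⟩
    · exact EE.nil
    · have hx0 : 0 ≤ x := by have := hL.2.1 1; simpa using this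
      rcases eq_or_lt_of_le hx0 with hx | hx
    -- flat case
      · have hx' : x = 0 := hx.symm
        subst hx'
        refine EE.flat r (ih r (by simp only [List.length_cons] at hlen; omega)
          (isLukas_of_zero_cons hL) (utf_suffix (u := [0]) (by simpa using hU))
          (fphau_suffix (u := [0]) (by simpa using hF) (by simp)))
      · have hx1 : 1 ≤ x := hx
        obtain ⟨C₁, Cs, L, hshape, hLC₁, hLCs, hLL, hUC₁, hUCs, hUL, hlen1, hlenCs, hlenL,
          hFpart, _⟩ := split_arch hL hU hx1
        obtain ⟨hPC₁, hPCs, hFL⟩ := hFpart hF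
        rw [hshape]
        exact EE.arch C₁ Cs L
          (toPP C₁.length C₁ le_rfl hLC₁ hUC₁ hPC₁)
          (fun M hM => toPP M.length M le_rfl (hLCs M hM) (hUCs M hM) (hPCs M hM))
          (ih L (by simp only [List.length_cons] at hlen hlenL; omega) hLL hUL hFL)

lemma ttSplit {v : List ℤ} (h : TT v) :
    ∃ q qs, QQ q ∧ (∀ m ∈ qs, QQ m) ∧ v = q ++ Qbody qs := by
  induction h with
  | nil => exact ⟨[], [], QQ.nil, by simp, by simp⟩
  | flat t _ ih =>
    obtain ⟨q, qs, hq, hqs, rfl⟩ := ih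
    refine ⟨[], q :: qs, QQ.nil, ?_, by simp⟩
    intro m hm
    rcases List.mem_cons.1 hm with rfl | hm
    · exact hq
    · exact hqs m hm
  | arch q₁ qs t hq₁ hqs _ ih =>
    obtain ⟨q, qs', hq, hqs', rfl⟩ := ih
    refine ⟨1 :: 0 :: (q₁ ++ Qbody qs ++ (-1:ℤ) :: q), qs',
      QQ.arch _ _ _ hq₁ hqs hq, hqs', ?_⟩
    simp [List.append_assoc]

lemma toTT : ∀ (n : ℕ) (w : List ℤ), w.length ≤ n →
    IsLukas w → (∀ s ∈ w, s ≤ 1) → UpThenFlat w → TT w := by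
  intro n
  induction n with
  | zero =>
    intro w hlen _ _ _
    have hw : w = [] := List.length_eq_zero_iff.1 (by omega)
    rw [hw]
    exact TT.nil
  | succ n ih =>
    intro w hlen hL hM hU
    rcases w with _ | ⟨x, r⟩
    · exact TT.nil
    · have hx0 : 0 ≤ x := by have := hL.2.1 1; simpa using this
      rcases eq_or_lt_of_le hx0 with hx | hx
      · have hx' : x = 0 := hx.symm
        subst hx'
        refine TT.flat r (ih r (by simp only [List.length_cons] at hlen; omega)
          (isLukas_of_zero_cons hL) (fun s hs => hM s (List.mem_cons_of_mem _ hs))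
          (utf_suffix (u := [0]) (by simpa using hU)))
      · have hx1 : 1 ≤ x := hx
        have hxe : x = 1 := le_antisymm (hM x (by simp)) hx1
        obtain ⟨C₁, Cs, L, hshape, hLC₁, hLCs, hLL, hUC₁, hUCs, hUL, hlen1, hlenCs, hlenL,
          _, _⟩ := split_arch hL hU hx1
        have hcs0 : Cs = [] := by
          have hinj := hshape
          rw [hxe] at hinj
          have : (1 : ℤ) = (Cs.length : ℤ) + 1 := by
            have := congrArg (fun l => l[0]?) hinj
            simpa using this
          have hcl : Cs.length = 0 := by omega
          exact List.length_eq_zero_iff.1 hcl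
        subst hcs0
        have hmem1 : ∀ s ∈ C₁, s ≤ 1 := by
          intro s hs
          refine hM s ?_
          rw [hshape]; simp [hs]
        have hmemL : ∀ s ∈ L, s ≤ 1 := by
          intro s hs
          refine hM s ?_
          rw [hshape]; simp [hs]
        have hT1 : TT C₁ := ih C₁ (by simp only [List.length_cons] at hlen hlen1; omega)
          hLC₁ hmem1 hUC₁
        have hTL : TT L := ih L (by simp only [List.length_cons] at hlen hlenL; omega)
          hLL hmemL hUL
        obtain ⟨q, qs, hq, hqs, hsplit⟩ := ttSplit hT1
        rw [hshape, hsplit]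
        have harch := TT.arch q qs L hq hqs hTL
        have : (1 :: 0 :: (q ++ Qbody qs ++ (-1:ℤ) :: L)) =
            (((List.length ([] : List (List ℤ)) : ℤ) + 1) ::
              0 :: ((q ++ Qbody qs) ++ (-1:ℤ) :: (Pbody [] ++ L))) := by
          simp
        exact this ▸ harch

/-! ### bridges: avoiding UU/UD vs UpThenFlat -/

lemma avoids_to_utf {w : List ℤ} (hL : IsLukas w) (h1 : ∀ s ∈ w, s ≤ 1)
    (hUU : AvoidsUU w) (hUD : AvoidsUD w) : UpThenFlat w := by
  intro j s hj hs
  have hs1 : s = 1 := le_antisymm (h1 s (List.mem_of_getElem? hj)) hs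
  subst hs1
  have hjlt : j < w.length := get?_some_lt hj
  cases hnext : w[j + 1]? with
  | none =>
    exfalso
    have hlen : w.length = j + 1 := by
      have := List.getElem?_eq_none_iff.1 hnext
      omega
    have hsum : (w.take (j + 1)).sum = w.sum := by
      rw [← hlen, List.take_length]
    have hstep := sum_take_succ_get? hj
    have h0 := hL.2.1 j
    rw [hL.2.2] at hsum
    omega
  | some s' =>
    have hb1 : s' ≤ 1 := h1 s' (List.mem_of_getElem? hnext)
    have hb2 : -1 ≤ s' := hL.1 s' (List.mem_of_getElem? hnext)
    have hne1 : s' ≠ 1 := fun h => hUU j ⟨hj, by rw [hnext, h]⟩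
    have hne2 : s' ≠ -1 := fun h => hUD j ⟨hj, by rw [hnext, h]⟩
    have hz : s' = 0 := by omega
    rw [hz]

lemma utf_to_avoids {w : List ℤ} (hU : UpThenFlat w) : AvoidsUU w ∧ AvoidsUD w := by
  constructor
  · intro j h
    have := hU j 1 h.1 le_rfl
    rw [h.2] at this
    simp at this
  · intro j h
    have := hU j 1 h.1 le_rfl
    rw [h.2] at this
    simp at this

end PsiBij
namespace PsiBij
open List

/-! ### computing ψ on grammar elements -/

lemma inter_flat : ∀ (l : List (List ℤ)) (a : List ℤ),
    (List.intersperse [(0:ℤ)] (a :: l)).flatten = a ++ Qbody l := by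
  intro l
  induction l with
  | nil => intro a; simp
  | cons b l ih =>
    intro a
    rw [List.intersperse_cons_cons]
    simp only [List.flatten_cons]
    rw [ih b]
    simp

lemma psi_arch {ψ : List ℤ → List ℤ} (hψ : PsiEquations ψ) {C₁ : List ℤ} {Cs : List (List ℤ)}
    {L : List ℤ} (h1 : IsLukas C₁) (h2 : ∀ C ∈ Cs, IsLukas C) (h3 : IsLukas L) :
    ψ (((Cs.length : ℤ) + 1) :: 0 :: (C₁ ++ (-1:ℤ) :: (Pbody Cs ++ L))) =
      1 :: 0 :: (ψ C₁ ++ Qbody (Cs.map ψ) ++ (-1:ℤ) :: ψ L) := by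
  have key := hψ.2.2 ((0 :: C₁) :: Cs) L (by simp)
    (by
      intro M hM
      rcases List.mem_cons.1 hM with rfl | hM
      · exact isLukas_zero_cons h1
      · exact h2 M hM) h3
  have e1 : ((((0 :: C₁) :: Cs).length : ℤ)) = (Cs.length : ℤ) + 1 := by
    simp only [List.length_cons]; push_cast; ring
  have e2 : ((((0 :: C₁) :: Cs).map (fun M => M ++ [(-1:ℤ)])).flatten ++ L) =
      0 :: (C₁ ++ (-1:ℤ) :: (Pbody Cs ++ L)) := by simp [Pbody]
  rw [e1, e2] at key
  rw [key, List.map_cons, hψ.2.1 C₁ h1, inter_flat]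
  simp

lemma qbody_pbody_len {Cs : List (List ℤ)} {f : List ℤ → List ℤ}
    (h : ∀ C ∈ Cs, (f C).length = C.length) :
    (Qbody (Cs.map f)).length = (Pbody Cs).length := by
  induction Cs with
  | nil => simp
  | cons C Cs ih =>
    have := h C (by simp)
    have h2 := ih (fun C hC => h C (by simp [hC]))
    simp only [List.map_cons, Qbody_cons, Pbody_cons, List.length_append, List.length_cons,
      List.length_nil]
    omega

lemma pp_main {ψ : List ℤ → List ℤ} (hψ : PsiEquations ψ) :
    ∀ {C : List ℤ}, PP C → QQ (ψ C) ∧ (ψ C).length = C.length := by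
  intro C h
  induction h with
  | nil => rw [hψ.1]; exact ⟨QQ.nil, rfl⟩
  | arch C₁ Cs C h1 hs h2 ih1 ihs ih =>
    rw [psi_arch hψ (pp_lukas h1) (fun M hM => pp_lukas (hs M hM)) (pp_lukas h2)]
    constructor
    · refine QQ.arch _ _ _ ih1.1 ?_ ih.1
      intro m hm
      obtain ⟨C', hC', rfl⟩ := List.mem_map.1 hm
      exact (ihs C' hC').1
    · have hq := qbody_pbody_len (f := ψ) (fun C hC => (ihs C hC).2)
      have e1 := ih1.2
      have e2 := ih.2
      simp only [List.length_cons, List.length_append]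
      omega

lemma ee_main {ψ : List ℤ → List ℤ} (hψ : PsiEquations ψ) :
    ∀ {w : List ℤ}, EE w → TT (ψ w) ∧ (ψ w).length = w.length := by
  intro w h
  induction h with
  | nil => rw [hψ.1]; exact ⟨TT.nil, rfl⟩
  | flat L hL ih =>
    rw [hψ.2.1 L (ee_lukas hL)]
    exact ⟨TT.flat _ ih.1, by simp [ih.2]⟩
  | arch C₁ Cs L h1 hs h2 ih =>
    rw [psi_arch hψ (pp_lukas h1) (fun M hM => pp_lukas (hs M hM)) (ee_lukas h2)]
    have q1 := pp_main hψ h1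
    constructor
    · refine TT.arch _ _ _ q1.1 ?_ ih.1
      intro m hm
      obtain ⟨C', hC', rfl⟩ := List.mem_map.1 hm
      exact (pp_main hψ (hs C' hC')).1
    · have hq := qbody_pbody_len (f := ψ) (fun C hC => (pp_main hψ (hs C hC)).2)
      have e1 := q1.2
      have e2 := ih.2
      simp only [List.length_cons, List.length_append]
      omega

/-! ### parsing / injectivity -/

lemma mid_facts {q : List ℤ} {qs : List (List ℤ)} (hq : QQ q) (hqs : ∀ m ∈ qs, QQ m) :
    NNlb 0 (q ++ Qbody qs) ∧ (q ++ Qbody qs).sum = 0 := by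
  have m1 := (qq_motzkin hq).1
  have comps : ∀ m ∈ qs, IsLukas m := fun m hm => (qq_motzkin (hqs m hm)).1
  constructor
  · exact nnlb_append (lukas_nnlb m1) (Qbody_nnlb comps) le_rfl (by rw [m1.2.2]; omega)
  · rw [List.sum_append, m1.2.2, Qbody_sum comps]; ring

lemma parse1_aux {a b a' b' : List ℤ} (h : a ++ (-1:ℤ) :: b = a' ++ (-1:ℤ) :: b')
    (ha' : NNlb 0 a') (hsa : a.sum = 0) (hl : a.length ≤ a'.length) : a = a' ∧ b = b' := by
  have hpre : a <+: a' :=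
    List.prefix_of_prefix_length_le (h ▸ a.prefix_append _) (a'.prefix_append _) hl
  obtain ⟨r, rfl⟩ := hpre
  rcases r with _ | ⟨y, r'⟩
  · refine ⟨by simp, ?_⟩
    rw [List.append_nil] at h
    have := List.append_cancel_left h
    injection this
  · exfalso
    have hy : y = -1 := by
      have l1 : (a ++ (-1:ℤ) :: b)[a.length]? = some (-1) := by
        have := get?_len a ((-1:ℤ) :: b); simpa using this
      have l2 : ((a ++ y :: r') ++ (-1:ℤ) :: b')[a.length]? = some y := by
        have := get?_len a (y :: (r' ++ (-1:ℤ) :: b')); simpa using this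
      rw [h, l2] at l1
      have := Option.some.inj l1
      omega
    subst hy
    have h2 := ha' (a.length + 1)
    rw [sum_take_append, List.take_of_length_le (by omega),
      show a.length + 1 - a.length = 1 by omega] at h2
    simp [hsa] at h2

lemma parse1 {a b a' b' : List ℤ} (h : a ++ (-1:ℤ) :: b = a' ++ (-1:ℤ) :: b')
    (ha : NNlb 0 a) (ha' : NNlb 0 a') (hsa : a.sum = 0) (hsa' : a'.sum = 0) :
    a = a' ∧ b = b' := by
  rcases le_total a.length a'.length with hl | hl
  · exact parse1_aux h ha' hsa hl
  · obtain ⟨e1, e2⟩ := parse1_aux h.symm ha hsa' hl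
    exact ⟨e1.symm, e2.symm⟩

lemma qbody_eq_nil {qs : List (List ℤ)} (h : Qbody qs = []) : qs = [] := by
  cases qs with
  | nil => rfl
  | cons q qs => simp [Qbody_cons] at h

lemma parse2 : ∀ (n : ℕ) (q q' : List ℤ) (qs qs' : List (List ℤ)),
    (q ++ Qbody qs).length ≤ n → QQ q → QQ q' → (∀ m ∈ qs, QQ m) → (∀ m ∈ qs', QQ m) →
    q ++ Qbody qs = q' ++ Qbody qs' → q = q' ∧ qs = qs' := by
  intro n
  induction n with
  | zero =>
    intro q q' qs qs' hlen _ _ _ _ heq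
    simp only [List.length_append] at hlen
    have e1 : q = [] := List.length_eq_zero_iff.1 (by omega)
    have e2 : qs = [] := qbody_eq_nil (List.length_eq_zero_iff.1 (by omega))
    subst e1; subst e2
    have hlen2 := congrArg List.length heq
    simp only [List.length_append, List.nil_append, List.length_nil] at hlen2
    have e3 : q' = [] := List.length_eq_zero_iff.1 (by omega)
    have e4 : qs' = [] := qbody_eq_nil (List.length_eq_zero_iff.1 (by omega))
    exact ⟨e3.symm, e4.symm⟩
  | succ n ih =>
    intro q q' qs qs' hlen h1 h2 h3 h4 heq
    have main : ∀ (q q' : List ℤ) (qs qs' : List (List ℤ)),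
        (q ++ Qbody qs).length ≤ n + 1 → QQ q → QQ q' → (∀ m ∈ qs, QQ m) → (∀ m ∈ qs', QQ m) →
        q ++ Qbody qs = q' ++ Qbody qs' → q.length ≤ q'.length → q = q' ∧ qs = qs' := by
      clear heq hlen h1 h2 h3 h4 q q' qs qs'
      intro q q' qs qs' hlen h1 h2 h3 h4 heq hle
      have hpre : q <+: q' :=
        List.prefix_of_prefix_length_le (heq ▸ q.prefix_append _) (q'.prefix_append _) hle
      obtain ⟨r, rfl⟩ := hpre
      rcases r with _ | ⟨y, r'⟩
      · rw [List.append_nil] at heq ⊢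
        have heq2 : Qbody qs = Qbody qs' := List.append_cancel_left heq
        refine ⟨rfl, ?_⟩
        rcases qs with _ | ⟨m, qs₀⟩
        · rcases qs' with _ | ⟨m', qs₀'⟩
          · rfl
          · simp [Qbody_cons] at heq2
        · rcases qs' with _ | ⟨m', qs₀'⟩
          · simp [Qbody_cons] at heq2
          · have heq3 : m ++ Qbody qs₀ = m' ++ Qbody qs₀' := by
              simpa using heq2
            obtain ⟨ea, eb⟩ := ih m m' qs₀ qs₀'
              (by
                simp only [List.length_append, Qbody_cons, List.length_cons] at hlen ⊢
                omega)
              (h3 m (by simp)) (h4 m' (by simp))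
              (fun x hx => h3 x (by simp [hx])) (fun x hx => h4 x (by simp [hx])) heq3
            rw [ea, eb]
      · exfalso
        have hlen2 := congrArg List.length heq
        simp only [List.length_append, List.length_cons] at hlen2
        have hqsne : qs ≠ [] := by
          intro hh
          subst hh
          simp at hlen2
          omega
        obtain ⟨m, qs₀, rfl⟩ : ∃ m qs₀, qs = m :: qs₀ := by
          rcases qs with _ | ⟨m, qs₀⟩
          · simp at hqsne
          · exact ⟨m, qs₀, rfl⟩
        have hy : y = 0 := by
          have l1 : (q ++ Qbody (m :: qs₀))[q.length]? = some 0 := by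
            have := get?_len q (Qbody (m :: qs₀)); simpa [Qbody_cons] using this
          have l2 : ((q ++ y :: r') ++ Qbody qs')[q.length]? = some y := by
            have := get?_len q (y :: (r' ++ Qbody qs')); simpa using this
          rw [heq, l2] at l1
          have := Option.some.inj l1
          omega
        subst hy
        have hnbz := qq_nbz h2 q.length (by
          have := get?_len q ((0:ℤ) :: r'); simpa using this)
        rw [show (q ++ (0:ℤ) :: r').take q.length = q from List.take_left,
          (qq_motzkin h1).1.2.2] at hnbz
        exact lt_irrefl _ hnbz
    rcases le_total q.length q'.length with hle | hle
    · exact main q q' qs qs' hlen h1 h2 h3 h4 heq hle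
    · obtain ⟨e1, e2⟩ := main q' q qs' qs (by rw [← heq]; exact hlen) h2 h1 h4 h3 heq.symm hle
      exact ⟨e1.symm, e2.symm⟩

lemma map_eq_of {f : List ℤ → List ℤ} (R : List ℤ → Prop)
    (inj2 : ∀ C C', R C → R C' → f C = f C' → C = C') :
    ∀ (l l' : List (List ℤ)), (∀ M ∈ l, R M) → (∀ M ∈ l', R M) → l.map f = l'.map f → l = l' := by
  intro l
  induction l with
  | nil =>
    intro l' _ _ h
    cases l' with
    | nil => rfl
    | cons a l'2 => simp at h
  | cons a l ihl =>
    intro l' hl hl' h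
    cases l' with
    | nil => simp at h
    | cons a' l'2 =>
      simp only [List.map_cons, List.cons.injEq] at h
      rw [inj2 a a' (hl a (by simp)) (hl' a' (by simp)) h.1,
        ihl l'2 (fun M hM => hl M (by simp [hM])) (fun M hM => hl' M (by simp [hM])) h.2]

end PsiBij
namespace PsiBij
open List

lemma map_eq_of2 {f : List ℤ → List ℤ} (R R' : List ℤ → Prop)
    (inj2 : ∀ C C', R C → R' C' → f C = f C' → C = C') :
    ∀ (l l' : List (List ℤ)), (∀ M ∈ l, R M) → (∀ M ∈ l', R' M) →
      l.map f = l'.map f → l = l' := by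
  intro l
  induction l with
  | nil =>
    intro l' _ _ h
    cases l' with
    | nil => rfl
    | cons a l'2 => simp at h
  | cons a l ihl =>
    intro l' hl hl' h
    cases l' with
    | nil => simp at h
    | cons a' l'2 =>
      simp only [List.map_cons, List.cons.injEq] at h
      rw [inj2 a a' (hl a (by simp)) (hl' a' (by simp)) h.1,
        ihl l'2 (fun M hM => hl M (by simp [hM])) (fun M hM => hl' M (by simp [hM])) h.2]

lemma pp_inj {ψ : List ℤ → List ℤ} (hψ : PsiEquations ψ) : ∀ (n : ℕ) (C C' : List ℤ),
    C.length ≤ n → PP C → PP C' → ψ C = ψ C' → C = C' := by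
  intro n
  induction n with
  | zero =>
    intro C C' hlen h h' heq
    have hC : C = [] := List.length_eq_zero_iff.1 (by omega)
    subst hC
    cases h' with
    | nil => rfl
    | arch C₁ Cs C2 p1 ps p2 =>
      rw [hψ.1, psi_arch hψ (pp_lukas p1) (fun M hM => pp_lukas (ps M hM)) (pp_lukas p2)] at heq
      simp at heq
  | succ n ih =>
    intro C C' hlen h h' heq
    cases h with
    | nil =>
      cases h' with
      | nil => rfl
      | arch C₁ Cs C2 p1 ps p2 =>
        rw [hψ.1, psi_arch hψ (pp_lukas p1) (fun M hM => pp_lukas (ps M hM)) (pp_lukas p2)]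
          at heq
        simp at heq
    | arch C₁ Cs C2 p1 ps p2 =>
      cases h' with
      | nil =>
        rw [hψ.1, psi_arch hψ (pp_lukas p1) (fun M hM => pp_lukas (ps M hM)) (pp_lukas p2)]
          at heq
        simp at heq
      | arch C₁' Cs' C2' p1' ps' p2' =>
        rw [psi_arch hψ (pp_lukas p1) (fun M hM => pp_lukas (ps M hM)) (pp_lukas p2),
          psi_arch hψ (pp_lukas p1') (fun M hM => pp_lukas (ps' M hM)) (pp_lukas p2')] at heq
        have q1 := (pp_main hψ p1).1
        have q1' := (pp_main hψ p1').1
        have qsm : ∀ m ∈ Cs.map ψ, QQ m := by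
          intro m hm
          obtain ⟨x, hx, rfl⟩ := List.mem_map.1 hm
          exact (pp_main hψ (ps x hx)).1
        have qsm' : ∀ m ∈ Cs'.map ψ, QQ m := by
          intro m hm
          obtain ⟨x, hx, rfl⟩ := List.mem_map.1 hm
          exact (pp_main hψ (ps' x hx)).1
        have mf := mid_facts q1 qsm
        have mf' := mid_facts q1' qsm'
        have heq2 : (ψ C₁ ++ Qbody (Cs.map ψ)) ++ (-1:ℤ) :: ψ C2 =
            (ψ C₁' ++ Qbody (Cs'.map ψ)) ++ (-1:ℤ) :: ψ C2' := by
          simp only [List.cons.injEq, List.append_assoc] at heq ⊢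
          exact heq.2.2
        obtain ⟨emid, etail⟩ := parse1 heq2 mf.1 mf'.1 mf.2 mf'.2
        obtain ⟨e1, e2⟩ := parse2 (ψ C₁ ++ Qbody (Cs.map ψ)).length _ _ _ _ le_rfl
          q1 q1' qsm qsm' emid
        simp only [List.length_cons, List.length_append] at hlen
        have hC1 : C₁ = C₁' := ih C₁ C₁' (by omega) p1 p1' e1
        have hC2 : C2 = C2' := ih C2 C2' (by omega) p2 p2' etail
        have hCs : Cs = Cs' := by
          refine map_eq_of2 (fun X => PP X ∧ X.length ≤ n) PP
            (fun A B hA hB hAB => ih A B hA.2 hA.1 hB hAB) Cs Cs' ?_ ps' e2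
          intro M hM
          exact ⟨ps M hM, by have := len_lt_pbody hM; omega⟩
        rw [hC1, hCs, hC2]

lemma ee_inj {ψ : List ℤ → List ℤ} (hψ : PsiEquations ψ) : ∀ (n : ℕ) (w w' : List ℤ),
    w.length ≤ n → EE w → EE w' → ψ w = ψ w' → w = w' := by
  intro n
  induction n with
  | zero =>
    intro w w' hlen h h' heq
    have hC : w = [] := List.length_eq_zero_iff.1 (by omega)
    subst hC
    cases h' with
    | nil => rfl
    | flat L hL =>
      rw [hψ.1, hψ.2.1 L (ee_lukas hL)] at heq
      simp at heq
    | arch C₁ Cs C2 p1 ps p2 =>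
      rw [hψ.1, psi_arch hψ (pp_lukas p1) (fun M hM => pp_lukas (ps M hM)) (ee_lukas p2)] at heq
      simp at heq
  | succ n ih =>
    intro w w' hlen h h' heq
    cases h with
    | nil =>
      cases h' with
      | nil => rfl
      | flat L hL =>
        rw [hψ.1, hψ.2.1 L (ee_lukas hL)] at heq
        simp at heq
      | arch C₁ Cs C2 p1 ps p2 =>
        rw [hψ.1, psi_arch hψ (pp_lukas p1) (fun M hM => pp_lukas (ps M hM)) (ee_lukas p2)]
          at heq
        simp at heq
    | flat L hL =>
      cases h' with
      | nil =>
        rw [hψ.1, hψ.2.1 L (ee_lukas hL)] at heq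
        simp at heq
      | flat L' hL' =>
        rw [hψ.2.1 L (ee_lukas hL), hψ.2.1 L' (ee_lukas hL')] at heq
        simp only [List.cons.injEq] at heq
        rw [ih L L' (by simp only [List.length_cons] at hlen; omega) hL hL' heq.2]
      | arch C₁ Cs C2 p1 ps p2 =>
        rw [hψ.2.1 L (ee_lukas hL),
          psi_arch hψ (pp_lukas p1) (fun M hM => pp_lukas (ps M hM)) (ee_lukas p2)] at heq
        simp at heq
    | arch C₁ Cs C2 p1 ps p2 =>
      cases h' with
      | nil =>
        rw [hψ.1, psi_arch hψ (pp_lukas p1) (fun M hM => pp_lukas (ps M hM)) (ee_lukas p2)]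
          at heq
        simp at heq
      | flat L' hL' =>
        rw [hψ.2.1 L' (ee_lukas hL'),
          psi_arch hψ (pp_lukas p1) (fun M hM => pp_lukas (ps M hM)) (ee_lukas p2)] at heq
        simp at heq
      | arch C₁' Cs' C2' p1' ps' p2' =>
        rw [psi_arch hψ (pp_lukas p1) (fun M hM => pp_lukas (ps M hM)) (ee_lukas p2),
          psi_arch hψ (pp_lukas p1') (fun M hM => pp_lukas (ps' M hM)) (ee_lukas p2')] at heq
        have q1 := (pp_main hψ p1).1
        have q1' := (pp_main hψ p1').1
        have qsm : ∀ m ∈ Cs.map ψ, QQ m := by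
          intro m hm
          obtain ⟨x, hx, rfl⟩ := List.mem_map.1 hm
          exact (pp_main hψ (ps x hx)).1
        have qsm' : ∀ m ∈ Cs'.map ψ, QQ m := by
          intro m hm
          obtain ⟨x, hx, rfl⟩ := List.mem_map.1 hm
          exact (pp_main hψ (ps' x hx)).1
        have mf := mid_facts q1 qsm
        have mf' := mid_facts q1' qsm'
        have heq2 : (ψ C₁ ++ Qbody (Cs.map ψ)) ++ (-1:ℤ) :: ψ C2 =
            (ψ C₁' ++ Qbody (Cs'.map ψ)) ++ (-1:ℤ) :: ψ C2' := by
          simp only [List.cons.injEq, List.append_assoc] at heq ⊢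
          exact heq.2.2
        obtain ⟨emid, etail⟩ := parse1 heq2 mf.1 mf'.1 mf.2 mf'.2
        obtain ⟨e1, e2⟩ := parse2 (ψ C₁ ++ Qbody (Cs.map ψ)).length _ _ _ _ le_rfl
          q1 q1' qsm qsm' emid
        simp only [List.length_cons, List.length_append] at hlen
        have hC1 : C₁ = C₁' := pp_inj hψ C₁.length C₁ C₁' le_rfl p1 p1' e1
        have hC2 : C2 = C2' := ih C2 C2' (by omega) p2 p2' etail
        have hCs : Cs = Cs' := by
          refine map_eq_of2 PP PP
            (fun A B hA hB hAB => pp_inj hψ A.length A B le_rfl hA hB hAB) Cs Cs' ps ps' e2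
        rw [hC1, hCs, hC2]

/-! ### surjectivity -/

lemma exists_preimage_list {f : List ℤ → List ℤ} {R : List ℤ → Prop} :
    ∀ (l : List (List ℤ)), (∀ m ∈ l, ∃ C, R C ∧ f C = m) →
    ∃ Cl : List (List ℤ), (∀ C ∈ Cl, R C) ∧ Cl.map f = l := by
  intro l
  induction l with
  | nil => intro _; exact ⟨[], by simp, by simp⟩
  | cons m l ih =>
    intro h
    obtain ⟨Cl, h1, h2⟩ := ih (fun x hx => h x (by simp [hx]))
    obtain ⟨C, hC, hfc⟩ := h m (by simp)
    refine ⟨C :: Cl, ?_, by simp [h2, hfc]⟩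
    intro X hX
    rcases List.mem_cons.1 hX with rfl | hX
    · exact hC
    · exact h1 X hX

lemma pp_surj {ψ : List ℤ → List ℤ} (hψ : PsiEquations ψ) :
    ∀ {q : List ℤ}, QQ q → ∃ C, PP C ∧ ψ C = q := by
  intro q h
  induction h with
  | nil => exact ⟨[], PP.nil, hψ.1⟩
  | arch q₁ qs t _ _ _ ih1 ihs iht =>
    obtain ⟨C₁, hC₁, e1⟩ := ih1
    obtain ⟨C2, hC2, e2⟩ := iht
    obtain ⟨Cs, hCs, e3⟩ := exists_preimage_list qs ihs
    refine ⟨((Cs.length : ℤ) + 1) :: 0 :: (C₁ ++ (-1:ℤ) :: (Pbody Cs ++ C2)),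
      PP.arch _ _ _ hC₁ hCs hC2, ?_⟩
    rw [psi_arch hψ (pp_lukas hC₁) (fun M hM => pp_lukas (hCs M hM)) (pp_lukas hC2), e1, e2, e3]

lemma ee_surj {ψ : List ℤ → List ℤ} (hψ : PsiEquations ψ) :
    ∀ {t : List ℤ}, TT t → ∃ w, EE w ∧ ψ w = t := by
  intro t h
  induction h with
  | nil => exact ⟨[], EE.nil, hψ.1⟩
  | flat t' _ ih =>
    obtain ⟨w, hw, e⟩ := ih
    exact ⟨0 :: w, EE.flat _ hw, by rw [hψ.2.1 w (ee_lukas hw), e]⟩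
  | arch q₁ qs t' hq₁ hqs _ iht =>
    obtain ⟨C2, hC2, e2⟩ := iht
    obtain ⟨C₁, hC₁, e1⟩ := pp_surj hψ hq₁
    obtain ⟨Cs, hCs, e3⟩ := exists_preimage_list qs (fun m hm => pp_surj hψ (hqs m hm))
    refine ⟨((Cs.length : ℤ) + 1) :: 0 :: (C₁ ++ (-1:ℤ) :: (Pbody Cs ++ C2)),
      EE.arch _ _ _ hC₁ hCs hC2, ?_⟩
    rw [psi_arch hψ (pp_lukas hC₁) (fun M hM => pp_lukas (hCs M hM)) (ee_lukas hC2), e1, e2, e3]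

end PsiBij

/-- `ψ` restricts to a bijection from the set `E_n` of Łukasiewicz paths of
length `n` in which every up step is immediately followed by a flat step and
every flat step at positive height is immediately preceded by an up step, onto
the set of Motzkin paths of length `n` avoiding `UU` and `UD`. -/
theorem psi_bij_E_to_avoidUU_UD (ψ : List ℤ → List ℤ) (hψ : PsiEquations ψ) (n : ℕ) :
    Set.BijOn ψ
      {w : List ℤ | IsLukas w ∧ UpThenFlat w ∧ FlatPosHeightAfterUp w ∧ w.length = n}
      {w : List ℤ | IsMotzkin w ∧ AvoidsUU w ∧ AvoidsUD w ∧ w.length = n} := by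
  refine ⟨?_, ?_, ?_⟩
  · intro w hw
    obtain ⟨hL, hU, hF, hn⟩ := hw
    have he : PsiBij.EE w := PsiBij.toEE w.length w le_rfl hL hU hF
    obtain ⟨hT, hlen⟩ := PsiBij.ee_main hψ he
    have hm := PsiBij.tt_motzkin hT
    have hav := PsiBij.utf_to_avoids (PsiBij.tt_utf hT)
    exact ⟨⟨hm.1, hm.2⟩, hav.1, hav.2, by rw [hlen, hn]⟩
  · intro w1 h1 w2 h2 heq
    exact PsiBij.ee_inj hψ w1.length w1 w2 le_rfl
      (PsiBij.toEE w1.length w1 le_rfl h1.1 h1.2.1 h1.2.2.1)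
      (PsiBij.toEE w2.length w2 le_rfl h2.1 h2.2.1 h2.2.2.1) heq
  · intro t ht
    obtain ⟨⟨hLuk, hle⟩, hUU, hUD, hn⟩ := ht
    have hutf := PsiBij.avoids_to_utf hLuk hle hUU hUD
    have hT : PsiBij.TT t := PsiBij.toTT t.length t le_rfl hLuk hle hutf
    obtain ⟨w, hw, he⟩ := PsiBij.ee_surj hψ hT
    refine ⟨w, ⟨PsiBij.ee_lukas hw, PsiBij.ee_utf hw, PsiBij.ee_fphau hw, ?_⟩, he⟩
    have hl := (PsiBij.ee_main hψ hw).2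
    rw [he] at hl
    omega
end
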